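/- arXiv:1908.09133 — 6 statements merged into one kernel-verified Lean document; each statement's English description precedes it below -/
import Mathlib

section
/- Let f : ℝ → ℝ be continuously differentiable with compact support contained in [a,b], where a < b, and let s ∈ (a,b). Then the principal value integral pv ∫_{-∞}^{∞} f(t)/(s−t) dt exists (i.e., the limit as ε → 0⁺ of ∫_{|t−s|>ε} f(t)/(s−t) dt exists) and equals f(s)·log((s−a)/(b−s)) − ∫_a^b g(s,t) dt, where g(s,t) = (f(s)−f(t))/(s−t) for s ≠ t and g(s,s) = f'(s). -/
open MeasureTheory Filter Set

/-- For `f : ℝ → ℝ` continuously differentiable with compact support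
contained in `[a,b]`, `a < b`, and `s ∈ (a,b)`, the principal value integral
`pv ∫ f(t)/(s-t) dt` exists and equals
`f(s) log((s-a)/(b-s)) - ∫_a^b g(s,t) dt` where `g(s,t) = (f(s)-f(t))/(s-t)`,
`g(s,s) = f'(s)`. -/
theorem stmt_0 (f : ℝ → ℝ) (a b s : ℝ) (hab : a < b)
    (hf : ContDiff ℝ 1 f) (hsupp : tsupport f ⊆ Icc a b)
    (hs : s ∈ Ioo a b)
    (g : ℝ → ℝ)
    (hg : ∀ t : ℝ, g t = if t = s then deriv f s else (f s - f t) / (s - t)) :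
    Tendsto (fun ε : ℝ => ∫ t in {t : ℝ | ε < |t - s|}, f t / (s - t))
      (nhdsWithin 0 (Ioi 0))
      (nhds (f s * Real.log ((s - a) / (b - s)) - ∫ t in a..b, g t)) := by
  obtain ⟨hs1, hs2⟩ := hs
  have hfz : ∀ t : ℝ, t ∉ Icc a b → f t = 0 := fun t ht =>
    image_eq_zero_of_notMem_tsupport (fun h => ht (hsupp h))
  -- continuity of g
  have hgne : ∀ t : ℝ, t ≠ s → g t = (f s - f t) / (s - t) := fun t ht => by
    rw [hg t, if_neg ht]
  have hgc : Continuous g := by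
    rw [continuous_iff_continuousAt]
    intro t
    rcases eq_or_ne t s with rfl | ht
    · have hd : HasDerivAt f (deriv f t) t := ((hf.differentiable one_ne_zero) t).hasDerivAt
      have h1 : Tendsto (slope f t) (nhdsWithin t {t}ᶜ) (nhds (deriv f t)) :=
        hasDerivAt_iff_tendsto_slope.mp hd
      have h2 : Tendsto g (nhdsWithin t {t}ᶜ) (nhds (deriv f t)) := by
        refine h1.congr' ?_
        filter_upwards [self_mem_nhdsWithin] with x hx
        rw [hgne x hx, slope_def_field]
        rw [← neg_sub (f x) (f t), ← neg_sub x t, neg_div_neg_eq]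
      rw [ContinuousAt, hg t, if_pos rfl, ← nhdsNE_sup_pure t,
        tendsto_sup]
      refine ⟨h2, ?_⟩
      have := tendsto_pure_nhds g t
      rwa [hg t, if_pos rfl] at this
    · have hc : ContinuousAt (fun x => (f s - f x) / (s - x)) t := by
        apply ContinuousAt.div
        · exact (continuous_const.sub hf.continuous).continuousAt
        · exact (continuous_const.sub continuous_id).continuousAt
        · exact sub_ne_zero.mpr (Ne.symm ht)
      refine hc.congr ?_
      filter_upwards [isOpen_ne.mem_nhds ht] with x hx
      exact (hgne x hx).symm
  have hgint : ∀ u v : ℝ, IntervalIntegrable g volume u v :=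
    fun u v => hgc.intervalIntegrable u v
  set δ : ℝ := min (s - a) (b - s) with hδdef
  have hδ : 0 < δ := lt_min (by linarith) (by linarith)
  -- the key identity for small ε
  have key : ∀ ε : ℝ, 0 < ε → ε < δ →
      (∫ t in {t : ℝ | ε < |t - s|}, f t / (s - t)) =
        f s * Real.log ((s - a) / (b - s)) -
          ((∫ t in a..b, g t) - ∫ t in (s - ε)..(s + ε), g t) := by
    intro ε hε hεδ
    have hεa : ε < s - a := lt_of_lt_of_le hεδ (min_le_left _ _)
    have hεb : ε < b - s := lt_of_lt_of_le hεδ (min_le_right _ _)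
    have ha1 : a < s - ε := by linarith
    have hb1 : s + ε < b := by linarith
    have hind : (fun t => f t / (s - t)) =
        (Icc a b).indicator (fun t => f t / (s - t)) := by
      funext t
      by_cases ht : t ∈ Icc a b
      · rw [indicator_of_mem ht]
      · rw [indicator_of_notMem ht, hfz t ht, zero_div]
    have step1 : (∫ t in {t : ℝ | ε < |t - s|}, f t / (s - t)) =
        ∫ t in Ico a (s - ε) ∪ Ioc (s + ε) b, f t / (s - t) := by
      have hset : {t : ℝ | ε < |t - s|} ∩ Icc a b = Ico a (s - ε) ∪ Ioc (s + ε) b := by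
        ext t
        simp only [mem_inter_iff, mem_setOf_eq, mem_Icc, mem_union, mem_Ico, mem_Ioc,
          lt_abs, neg_sub]
        constructor
        · rintro ⟨h | h, h2, h3⟩
          · right; constructor <;> linarith
          · left; constructor <;> linarith
        · rintro (⟨h1, h2⟩ | ⟨h1, h2⟩)
          · exact ⟨Or.inr (by linarith), by linarith, by linarith⟩
          · exact ⟨Or.inl (by linarith), by linarith, by linarith⟩
      conv_lhs => rw [hind]
      rw [setIntegral_indicator measurableSet_Icc, hset]
    have hcont : ∀ t : ℝ, t ≠ s → ContinuousAt (fun t => f t / (s - t)) t := by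
      intro t ht
      apply ContinuousAt.div
      · exact hf.continuous.continuousAt
      · exact (continuous_const.sub continuous_id).continuousAt
      · exact sub_ne_zero.mpr (Ne.symm ht)
    have hi1 : IntegrableOn (fun t => f t / (s - t)) (Ico a (s - ε)) volume := by
      refine (ContinuousOn.integrableOn_compact isCompact_Icc ?_).mono_set
        Ico_subset_Icc_self
      intro t ht
      exact (hcont t (by rintro rfl; exact absurd ht.2 (by linarith))).continuousWithinAt
    have hi2 : IntegrableOn (fun t => f t / (s - t)) (Ioc (s + ε) b) volume := by
      refine (ContinuousOn.integrableOn_compact isCompact_Icc ?_).mono_set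
        Ioc_subset_Icc_self
      intro t ht
      exact (hcont t (by rintro rfl; exact absurd ht.1 (by linarith))).continuousWithinAt
    have hdisj : Disjoint (Ico a (s - ε)) (Ioc (s + ε) b) := by
      apply Set.disjoint_left.mpr
      rintro t ⟨_, h2⟩ ⟨h3, _⟩
      linarith
    have step2 : (∫ t in Ico a (s - ε) ∪ Ioc (s + ε) b, f t / (s - t)) =
        (∫ t in a..(s - ε), f t / (s - t)) + ∫ t in (s + ε)..b, f t / (s - t) := by
      rw [setIntegral_union hdisj measurableSet_Ioc hi1 hi2,
        integral_Ico_eq_integral_Ioo, ← integral_Ioc_eq_integral_Ioo,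
        ← intervalIntegral.integral_of_le ha1.le,
        ← intervalIntegral.integral_of_le hb1.le]
    -- compute each piece
    have hsub1 : ∀ t ∈ uIcc a (s - ε), f t / (s - t) = f s * (1 / (s - t)) - g t := by
      intro t ht
      rw [uIcc_of_le ha1.le] at ht
      have hts : t ≠ s := by rintro rfl; exact absurd ht.2 (by linarith)
      rw [hgne t hts]
      have h0 : s - t ≠ 0 := sub_ne_zero.mpr (Ne.symm hts)
      field_simp
      ring
    have hsub2 : ∀ t ∈ uIcc (s + ε) b, f t / (s - t) = f s * (1 / (s - t)) - g t := by
      intro t ht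
      rw [uIcc_of_le hb1.le] at ht
      have hts : t ≠ s := by rintro rfl; exact absurd ht.1 (by linarith)
      rw [hgne t hts]
      have h0 : s - t ≠ 0 := sub_ne_zero.mpr (Ne.symm hts)
      field_simp
      ring
    have hii1 : IntervalIntegrable (fun t => f s * (1 / (s - t))) volume a (s - ε) := by
      apply ContinuousOn.intervalIntegrable
      intro t ht
      rw [uIcc_of_le ha1.le] at ht
      have htne : t ≠ s := by rintro rfl; exact absurd ht.2 (by linarith)
      have hts : s - t ≠ 0 := sub_ne_zero.mpr (Ne.symm htne)
      exact (continuousAt_const.mul ((continuousAt_const.div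
        ((continuous_const.sub continuous_id).continuousAt) hts))).continuousWithinAt
    have hii2 : IntervalIntegrable (fun t => f s * (1 / (s - t))) volume (s + ε) b := by
      apply ContinuousOn.intervalIntegrable
      intro t ht
      rw [uIcc_of_le hb1.le] at ht
      have htne : t ≠ s := by rintro rfl; exact absurd ht.1 (by linarith)
      have hts : s - t ≠ 0 := sub_ne_zero.mpr (Ne.symm htne)
      exact (continuousAt_const.mul ((continuousAt_const.div
        ((continuous_const.sub continuous_id).continuousAt) hts))).continuousWithinAt
    have hlog1 : (∫ t in a..(s - ε), 1 / (s - t)) = Real.log ((s - a) / ε) := by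
      rw [intervalIntegral.integral_comp_sub_left (fun x => 1 / x) s,
        show s - (s - ε) = ε by ring]
      rw [integral_one_div]
      rw [uIcc_of_le (by linarith : ε ≤ s - a)]
      rintro ⟨h1, _⟩
      linarith
    have hlog2 : (∫ t in (s + ε)..b, 1 / (s - t)) = Real.log (ε / (b - s)) := by
      rw [intervalIntegral.integral_comp_sub_left (fun x => 1 / x) s,
        show s - (s + ε) = -ε by ring]
      rw [integral_one_div, show (-ε) / (s - b) = ε / (b - s) by
        rw [show s - b = -(b - s) by ring, neg_div_neg_eq]]
      rw [uIcc_of_le (by linarith : s - b ≤ -ε)]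
      rintro ⟨_, h2⟩
      linarith
    have e1 : (∫ t in a..(s - ε), f t / (s - t)) =
        f s * Real.log ((s - a) / ε) - ∫ t in a..(s - ε), g t := by
      rw [intervalIntegral.integral_congr hsub1,
        intervalIntegral.integral_sub hii1 (hgint _ _),
        intervalIntegral.integral_const_mul, hlog1]
    have e2 : (∫ t in (s + ε)..b, f t / (s - t)) =
        f s * Real.log (ε / (b - s)) - ∫ t in (s + ε)..b, g t := by
      rw [intervalIntegral.integral_congr hsub2,
        intervalIntegral.integral_sub hii2 (hgint _ _),
        intervalIntegral.integral_const_mul, hlog2]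
    have hlogsum : Real.log ((s - a) / ε) + Real.log (ε / (b - s)) =
        Real.log ((s - a) / (b - s)) := by
      rw [← Real.log_mul (ne_of_gt (div_pos (by linarith) hε)) (ne_of_gt (div_pos hε (by linarith)))]
      congr 1
      field_simp
    have hgsum : (∫ t in a..(s - ε), g t) + (∫ t in (s + ε)..b, g t) =
        (∫ t in a..b, g t) - ∫ t in (s - ε)..(s + ε), g t := by
      have hA := intervalIntegral.integral_add_adjacent_intervals
        (hgint a (s - ε)) (hgint (s - ε) (s + ε))
      have hB := intervalIntegral.integral_add_adjacent_intervals
        (hgint a (s + ε)) (hgint (s + ε) b)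
      linarith
    rw [step1, step2, e1, e2, ← hlogsum, mul_add]
    linarith [hgsum]
  -- bound for g near s
  obtain ⟨C, hC⟩ := (isCompact_Icc : IsCompact (Icc (s - 1) (s + 1))).exists_bound_of_continuousOn
    hgc.continuousOn
  have hM : Tendsto (fun ε : ℝ => ∫ t in (s - ε)..(s + ε), g t)
      (nhdsWithin 0 (Ioi 0)) (nhds 0) := by
    refine squeeze_zero_norm' (a := fun ε => max C 0 * (2 * ε)) ?_ ?_
    · filter_upwards [Ioo_mem_nhdsGT_of_mem (by constructor <;> norm_num :
        (0:ℝ) ∈ Ico 0 1)] with ε hε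
      have hb : ∀ x ∈ uIoc (s - ε) (s + ε), ‖g x‖ ≤ max C 0 := by
        intro x hx
        rw [uIoc_of_le (by linarith [hε.1] : s - ε ≤ s + ε)] at hx
        exact le_trans (hC x ⟨by linarith [hx.1, hε.2], by linarith [hx.2, hε.2]⟩)
          (le_max_left _ _)
      have := intervalIntegral.norm_integral_le_of_norm_le_const hb
      calc ‖∫ t in (s - ε)..(s + ε), g t‖ ≤ max C 0 * |s + ε - (s - ε)| := this
        _ = max C 0 * (2 * ε) := by
            rw [show s + ε - (s - ε) = 2 * ε by ring, abs_of_pos (by linarith [hε.1])]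
    · have hcont2 : Continuous (fun ε : ℝ => max C 0 * (2 * ε)) := by continuity
      have h0 := hcont2.tendsto 0
      simp only [mul_zero] at h0
      exact h0.mono_left nhdsWithin_le_nhds
  -- assemble
  have hT : Tendsto (fun ε : ℝ => f s * Real.log ((s - a) / (b - s)) -
      ((∫ t in a..b, g t) - ∫ t in (s - ε)..(s + ε), g t))
      (nhdsWithin 0 (Ioi 0))
      (nhds (f s * Real.log ((s - a) / (b - s)) - ∫ t in a..b, g t)) := by
    have := tendsto_const_nhds (x := f s * Real.log ((s - a) / (b - s)))
      (f := nhdsWithin (0:ℝ) (Ioi 0)) |>.sub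
      ((tendsto_const_nhds (x := ∫ t in a..b, g t)
        (f := nhdsWithin (0:ℝ) (Ioi 0))).sub hM)
    simpa using this
  refine hT.congr' ?_
  filter_upwards [Ioo_mem_nhdsGT_of_mem (⟨le_refl 0, hδ⟩ : (0:ℝ) ∈ Ico 0 δ)] with ε hε
  exact (key ε hε.1 hε.2).symm
end

section
/- Let f : ℝ → ℝ be continuously differentiable with compact support contained in [a,b], where a < b. Then the principal value integral pv ∫_{-∞}^{∞} f(t)/(a−t) dt exists and equals ∫_a^b g_a(t) dt, where g_a(t) = f(t)/(a−t) for t > a and g_a(a) = 0. -/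
open MeasureTheory Filter Set

/-- For `f : ℝ → ℝ` continuously differentiable with compact support
contained in `[a,b]`, `a < b`, the principal value integral `pv ∫ f(t)/(a-t) dt`
exists and equals `∫_a^b g_a(t) dt` where `g_a(t) = f(t)/(a-t)` for `t > a` and
`g_a(a) = 0`. -/
theorem stmt_2 (f : ℝ → ℝ) (a b : ℝ) (hab : a < b)
    (hf : ContDiff ℝ 1 f) (hsupp : tsupport f ⊆ Icc a b)
    (gA : ℝ → ℝ)
    (hgA : ∀ t : ℝ, gA t = if t = a then 0 else f t / (a - t)) :
    Tendsto (fun ε : ℝ => ∫ t in {t : ℝ | ε < |t - a|}, f t / (a - t))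
      (nhdsWithin 0 (Ioi 0))
      (nhds (∫ t in a..b, gA t)) := by
  have hf0 : ∀ t, t ∉ Icc a b → f t = 0 := fun t ht =>
    image_eq_zero_of_notMem_tsupport (fun h => ht (hsupp h))
  have hEqIio : Set.EqOn f 0 (Iio a) := fun t ht => hf0 t (by
    simp only [mem_Icc, not_and_or, not_le]
    left; exact ht)
  have hfa : f a = 0 := by
    have := hEqIio.closure hf.continuous continuous_const
    simpa using this (by simp [closure_Iio] : a ∈ closure (Iio a))
  -- slope tends to 0
  have hd : HasDerivAt f (deriv f a) a := (hf.differentiable one_ne_zero a).hasDerivAt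
  have hslope : Tendsto (slope f a) (nhdsWithin a {a}ᶜ) (nhds (deriv f a)) :=
    hasDerivAt_iff_tendsto_slope.1 hd
  have hda : deriv f a = 0 := by
    have h1 : Tendsto (slope f a) (nhdsWithin a (Iio a)) (nhds (deriv f a)) :=
      hslope.mono_left (nhdsWithin_mono a (fun t ht => ne_of_lt ht))
    have h2 : Tendsto (slope f a) (nhdsWithin a (Iio a)) (nhds 0) := by
      apply Tendsto.congr' _ tendsto_const_nhds
      filter_upwards [self_mem_nhdsWithin] with t ht
      simp [slope, hEqIio ht, hfa]
    exact tendsto_nhds_unique h1 h2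
  rw [hda] at hslope
  -- gA tendency at a
  have hgA_eq : ∀ t, t ≠ a → gA t = -(slope f a t) := by
    intro t ht
    rw [hgA t, if_neg ht]
    rw [slope_def_field, hfa, sub_zero, show a - t = -(t - a) by ring, div_neg]
  have hgAa : gA a = 0 := by rw [hgA a, if_pos rfl]
  have hg_at_a : Tendsto gA (nhds a) (nhds 0) := by
    rw [← nhdsNE_sup_pure a]
    rw [tendsto_sup]
    constructor
    · have hn : Tendsto (fun t => -(slope f a t)) (nhdsWithin a {a}ᶜ) (nhds 0) := by
        simpa using hslope.neg
      apply Tendsto.congr' _ hn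
      filter_upwards [self_mem_nhdsWithin] with t ht
      exact (hgA_eq t ht).symm
    · exact hgAa ▸ tendsto_pure_nhds gA a
  have hgc : Continuous gA := by
    rw [continuous_iff_continuousAt]
    intro x
    by_cases hx : x = a
    · subst hx
      simpa [ContinuousAt, hgAa] using hg_at_a
    · have hne : a - x ≠ 0 := sub_ne_zero.2 (Ne.symm hx)
      have hc : ContinuousAt (fun y => f y / (a - y)) x :=
        (hf.continuous.continuousAt).div (continuous_const.sub continuous_id).continuousAt hne
      apply hc.congr
      filter_upwards [isOpen_compl_singleton.mem_nhds hx] with y hy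
      rw [hgA y, if_neg (by simpa using hy)]
  -- eventual equality
  have key : ∀ᶠ ε in nhdsWithin (0:ℝ) (Ioi 0),
      (∫ t in {t : ℝ | ε < |t - a|}, f t / (a - t)) = ∫ t in (a+ε)..b, gA t := by
    filter_upwards [Ioo_mem_nhdsGT_of_mem (⟨le_refl 0, sub_pos.2 hab⟩ : (0:ℝ) ∈ Ico 0 (b - a))]
      with ε hε
    obtain ⟨hε0, hεb⟩ := hε
    have hind : (fun t => f t / (a - t)) = (Icc a b).indicator (fun t => f t / (a - t)) := by
      funext t
      by_cases ht : t ∈ Icc a b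
      · rw [indicator_of_mem ht]
      · rw [indicator_of_notMem ht, hf0 t ht, zero_div]
    rw [hind, setIntegral_indicator measurableSet_Icc]
    have hset : {t : ℝ | ε < |t - a|} ∩ Icc a b = Ioc (a + ε) b := by
      ext t
      simp only [mem_inter_iff, mem_setOf_eq, mem_Icc, mem_Ioc, lt_abs]
      constructor
      · rintro ⟨h1 | h1, h2, h3⟩ <;> constructor <;> linarith
      · rintro ⟨h1, h2⟩
        refine ⟨Or.inl (by linarith), by linarith, h2⟩
    rw [hset]
    rw [intervalIntegral.integral_of_le (by linarith : a + ε ≤ b)]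
    apply setIntegral_congr_fun measurableSet_Ioc
    intro t ht
    rw [hgA t, if_neg (by intro h; rw [h] at ht; linarith [ht.1] : t ≠ a)]
  -- limit of interval integral
  have hint : ∀ u v : ℝ, IntervalIntegrable gA volume u v := fun u v =>
    hgc.intervalIntegrable u v
  have hcont : Continuous fun u => ∫ t in u..b, gA t := by
    have := intervalIntegral.continuous_primitive hint b
    have h2 : (fun u => ∫ t in u..b, gA t) = fun u => -(∫ t in b..u, gA t) := by
      funext u; rw [intervalIntegral.integral_symm]
    rw [h2]
    exact this.neg
  have h1 : Tendsto (fun ε : ℝ => a + ε) (nhdsWithin 0 (Ioi 0)) (nhds a) := by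
    have : Tendsto (fun ε : ℝ => a + ε) (nhds 0) (nhds (a + 0)) :=
      (continuous_const.add continuous_id).tendsto 0
    rw [add_zero] at this
    exact this.mono_left nhdsWithin_le_nhds
  have h2 : Tendsto (fun ε : ℝ => ∫ t in (a+ε)..b, gA t) (nhdsWithin 0 (Ioi 0))
      (nhds (∫ t in a..b, gA t)) := (hcont.tendsto a).comp h1
  exact h2.congr' (key.mono fun ε h => h.symm)
end

section
/- Let f : ℝ → ℝ be continuously differentiable with compact support contained in [a,b], where a < b. Then the principal value integral pv ∫_{-∞}^{∞} f(t)/(b−t) dt exists and equals ∫_a^b g_b(t) dt, where g_b(t) = f(t)/(b−t) for t < b and g_b(b) = 0. -/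
open MeasureTheory Filter Set

/-- For `f : ℝ → ℝ` continuously differentiable with compact support
contained in `[a,b]`, `a < b`, the principal value integral `pv ∫ f(t)/(b-t) dt`
exists and equals `∫_a^b g_b(t) dt` where `g_b(t) = f(t)/(b-t)` for `t < b` and
`g_b(b) = 0`. -/
theorem stmt_3 (f : ℝ → ℝ) (a b : ℝ) (hab : a < b)
    (hf : ContDiff ℝ 1 f) (hsupp : tsupport f ⊆ Icc a b)
    (gB : ℝ → ℝ)
    (hgB : ∀ t : ℝ, gB t = if t = b then 0 else f t / (b - t)) :
    Tendsto (fun ε : ℝ => ∫ t in {t : ℝ | ε < |t - b|}, f t / (b - t))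
      (nhdsWithin 0 (Ioi 0))
      (nhds (∫ t in a..b, gB t)) := by
  -- f vanishes outside (a,b] etc.
  have hf0 : ∀ t, t ∉ Icc a b → f t = 0 := fun t ht =>
    image_eq_zero_of_notMem_tsupport (fun h => ht (hsupp h))
  have hfIic : ∀ t, t ≤ a → f t = 0 := by
    have h1 : EqOn f 0 (Iio a) := fun x hx => hf0 x (by simp [Icc]; intro h; linarith [hx.out])
    have h2 : EqOn f 0 (closure (Iio a)) := h1.closure hf.continuous continuous_const
    intro t ht
    simpa using h2 (by simpa [closure_Iio] using ht)
  have hfb : ∀ t, b ≤ t → f t = 0 := by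
    have h1 : EqOn f 0 (Ioi b) := fun x hx => hf0 x (by simp [Icc]; intro h; linarith [hx.out])
    have h2 : EqOn f 0 (closure (Ioi b)) := h1.closure hf.continuous continuous_const
    intro t ht
    simpa using h2 (by simpa [closure_Ioi] using ht)
  have hgB0 : ∀ t, t ≤ a → gB t = 0 := by
    intro t ht
    rw [hgB]
    have : t ≠ b := by linarith
    simp [this, hfIic t ht]
  have hgBb : ∀ t, b ≤ t → gB t = 0 := by
    intro t ht
    rw [hgB]
    rcases eq_or_lt_of_le ht with h | h
    · simp [h.symm]
    · simp [hfb t ht]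
  -- Lipschitz bound
  have hcs : HasCompactSupport f :=
    IsCompact.of_isClosed_subset isCompact_Icc (isClosed_tsupport f) hsupp
  obtain ⟨C, hC⟩ := hf.lipschitzWith_of_hasCompactSupport hcs one_ne_zero
  have hbd : ∀ t, ‖gB t‖ ≤ C := by
    intro t
    rw [hgB]
    by_cases ht : t = b
    · simp [ht, C.coe_nonneg]
    · simp only [ht, if_false]
      have hne : b - t ≠ 0 := sub_ne_zero.2 (fun h => ht h.symm)
      have : |f t| = |f t - f b| := by rw [hfb b le_rfl, sub_zero]
      have hlip : |f t - f b| ≤ C * |t - b| := by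
        have := hC.dist_le_mul t b
        simpa [Real.dist_eq] using this
      rw [Real.norm_eq_abs, abs_div]
      rw [div_le_iff₀ (abs_pos.2 hne)]
      calc |f t| = |f t - f b| := this
        _ ≤ C * |t - b| := hlip
        _ = C * |b - t| := by rw [abs_sub_comm]
  -- measurability & integrability of gB
  have hmeas : Measurable gB := by
    have : gB = fun t => if t = b then 0 else f t / (b - t) := funext hgB
    rw [this]
    exact Measurable.ite (MeasurableSet.singleton b) measurable_const
      (hf.continuous.measurable.div ((measurable_const.sub measurable_id)))
  have hInt : Integrable gB := by
    refine Integrable.mono'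
      ((integrable_indicator_iff measurableSet_Icc).2
        (integrableOn_const measure_Icc_lt_top.ne) :
        Integrable ((Icc a b).indicator fun _ => (C:ℝ)))
      hmeas.aestronglyMeasurable (ae_of_all _ fun t => ?_)
    by_cases ht : t ∈ Icc a b
    · rw [Set.indicator_of_mem ht]; exact hbd t
    · rw [Set.indicator_of_notMem ht]
      have : gB t = 0 := by
        simp only [mem_Icc, not_and_or, not_le] at ht
        rcases ht with h | h
        · exact hgB0 t h.le
        · exact hgBb t h.le
      simp [this]
  -- equality of truncated integral with interval integral
  have key : ∀ ε ∈ Ioo (0:ℝ) (b-a),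
      (∫ t in {t : ℝ | ε < |t - b|}, f t / (b - t)) = ∫ t in a..(b-ε), gB t := by
    intro ε hε
    have hsetm : MeasurableSet {t : ℝ | ε < |t - b|} :=
      (isOpen_lt continuous_const ((continuous_id.sub continuous_const).abs)).measurableSet
    have h1 : (∫ t in {t : ℝ | ε < |t - b|}, f t / (b - t))
        = ∫ t in Iio (b - ε), gB t := by
      rw [← integral_indicator hsetm, ← integral_indicator measurableSet_Iio]
      congr 1
      funext t
      simp only [indicator_apply, mem_setOf_eq, mem_Iio]
      by_cases ht : ε < |t - b|
      · rw [if_pos ht]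
        by_cases ht2 : t < b - ε
        · rw [if_pos ht2, hgB]
          have : t ≠ b := by linarith [hε.1]
          simp [this]
        · rw [if_neg ht2]
          have htb : b < t := by
            rcases lt_or_ge t b with h | h
            · exfalso
              rw [abs_of_neg (show t - b < 0 by linarith)] at ht
              exact ht2 (by linarith)
            · rcases eq_or_lt_of_le h with h' | h'
              · exfalso; rw [← h'] at ht; simp at ht; linarith [hε.1]
              · exact h'
          simp [hfb t htb.le]
      · rw [if_neg ht]
        have hneg : ¬ t < b - ε := by
          intro h
          exact ht (by rw [abs_sub_comm, abs_of_pos (by linarith [hε.1])]; linarith [hε.1])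
        rw [if_neg hneg]
    have h2 : (∫ t in Iio (b - ε), gB t) = ∫ t in a..(b-ε), gB t := by
      rw [intervalIntegral.integral_of_le (by linarith [hε.2]),
        ← integral_indicator measurableSet_Iio, ← integral_indicator measurableSet_Ioc]
      apply integral_congr_ae
      have hne : ∀ᵐ t : ℝ, t ≠ b - ε := by
        have hs : {t : ℝ | ¬ t ≠ b - ε} = {b - ε} := by ext t; simp
        rw [ae_iff, hs]
        exact Real.volume_singleton
      filter_upwards [hne] with t htne
      simp only [indicator_apply, mem_Iio, mem_Ioc]
      by_cases h : t < b - ε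
      · rw [if_pos h]
        by_cases h2 : a < t
        · rw [if_pos ⟨h2, h.le⟩]
        · rw [if_neg (by simp [h2] : ¬ (a < t ∧ t ≤ b - ε)), hgB0 t (le_of_not_gt h2)]
      · rw [if_neg h, if_neg]
        intro hmem
        exact htne (le_antisymm hmem.2 (le_of_not_gt h))
    rw [h1, h2]
  -- limit
  have hcont : Continuous fun x => ∫ t in a..x, gB t :=
    intervalIntegral.continuous_primitive (fun _ _ => hInt.intervalIntegrable) a
  have hlim : Tendsto (fun ε : ℝ => ∫ t in a..(b-ε), gB t) (nhdsWithin 0 (Ioi 0))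
      (nhds (∫ t in a..b, gB t)) := by
    have h1 : Tendsto (fun ε : ℝ => b - ε) (nhdsWithin 0 (Ioi 0)) (nhds b) := by
      have h0 : Tendsto (fun ε : ℝ => b - ε) (nhds 0) (nhds (b - 0)) :=
        tendsto_const_nhds.sub tendsto_id
      simpa using h0.mono_left nhdsWithin_le_nhds
    exact (hcont.tendsto b).comp h1
  refine hlim.congr' ?_
  filter_upwards [Ioo_mem_nhdsGT_of_mem (by constructor <;> simp [hab, sub_pos] : (0:ℝ) ∈ Ico 0 (b-a))] with ε hε
  exact (key ε hε).symm
end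

section
/- Let f : ℝ → ℝ be continuously differentiable with compact support contained in [a,b], where a < b, and let a' ≤ a and b ≤ b' with [a,b] ⊆ [a',b']. Then for every s ∈ (a,b): f(s)·log((s−a)/(b−s)) − ∫_a^b g(s,t) dt = f(s)·log((s−a')/(b'−s)) − ∫_{a'}^{b'} g(s,t) dt, where g(s,t) = (f(s)−f(t))/(s−t) for s ≠ t and g(s,s) = f'(s). -/
open Set

lemma integral_inv_sub (s c d : ℝ) (h : ∀ t ∈ uIcc c d, s - t ≠ 0) :
    ∫ t in c..d, (s - t)⁻¹ = Real.log (s - c) - Real.log (s - d) := by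
  have key : ∫ t in c..d, (s - t)⁻¹
      = (fun t => -Real.log (s - t)) d - (fun t => -Real.log (s - t)) c := by
    apply intervalIntegral.integral_eq_sub_of_hasDerivAt
    · intro t ht
      have h1 : HasDerivAt (fun t : ℝ => s - t) (-1) t := by
        simpa using ((hasDerivAt_id t).const_sub s)
      have h2 := (Real.hasDerivAt_log (h t ht)).comp t h1
      have h3 := h2.neg
      convert h3 using 1
      · rfl
      · ring
    · exact ((continuous_const.sub continuous_id).continuousOn.inv₀ h).intervalIntegrable
  simp only [key]
  ring

/-- For `f : ℝ → ℝ` continuously differentiable with compact support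
contained in `[a,b]`, `a < b`, and any larger interval `[a',b'] ⊇ [a,b]`, the two
expressions for the principal value `pv ∫ f(t)/(s-t) dt` agree for every `s ∈ (a,b)`:
`f(s)·log((s-a)/(b-s)) - ∫_a^b g(s,t) dt = f(s)·log((s-a')/(b'-s)) - ∫_{a'}^{b'} g(s,t) dt`,
where `g(s,t) = (f(s)-f(t))/(s-t)`, `g(s,s) = f'(s)`. -/
theorem stmt_6 (f : ℝ → ℝ) (a b a' b' : ℝ) (hab : a < b)
    (hf : ContDiff ℝ 1 f) (hsupp : tsupport f ⊆ Icc a b)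
    (ha' : a' ≤ a) (hb' : b ≤ b')
    (g : ℝ → ℝ → ℝ)
    (hg : ∀ s t : ℝ, g s t = if t = s then deriv f s else (f s - f t) / (s - t)) :
    ∀ s ∈ Ioo a b,
      f s * Real.log ((s - a) / (b - s)) - ∫ t in a..b, g s t
        = f s * Real.log ((s - a') / (b' - s)) - ∫ t in a'..b', g s t := by
  intro s hs
  obtain ⟨hsa, hsb⟩ := hs
  have hf0 : ∀ t : ℝ, t ∉ Icc a b → f t = 0 := by
    intro t ht
    exact image_eq_zero_of_notMem_tsupport (fun h => ht (hsupp h))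
  -- continuity of g s
  have hgc : Continuous (g s) := by
    rw [continuous_iff_continuousAt]
    intro t
    by_cases hts : t = s
    · subst hts
      have hd : HasDerivAt f (deriv f t) t :=
        ((hf.differentiable one_ne_zero) t).hasDerivAt
      have hslope := hasDerivAt_iff_tendsto_slope.mp hd
      have h1 : Filter.Tendsto (g t) (nhdsWithin t {t}ᶜ) (nhds (g t t)) := by
        have hgt : g t t = deriv f t := by rw [hg]; simp
        rw [hgt]
        refine hslope.congr' ?_
        filter_upwards [self_mem_nhdsWithin] with u hu
        have hu' : u ≠ t := hu
        rw [hg, if_neg hu', slope_def_field]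
        rw [div_eq_div_iff (sub_ne_zero.mpr hu') (sub_ne_zero.mpr hu'.symm)]
        ring
      have h2 : Filter.Tendsto (g t) (pure t) (nhds (g t t)) :=
        tendsto_pure_nhds (g t) t
      have h3 := h1.sup h2
      rw [nhdsNE_sup_pure] at h3
      exact h3
    · have hne : s - t ≠ 0 := sub_ne_zero.mpr (Ne.symm hts)
      have hc : ContinuousAt (fun u => (f s - f u) / (s - u)) t :=
        ((continuousAt_const.sub (hf.continuous.continuousAt)).div
          (continuousAt_const.sub continuousAt_id) hne)
      refine hc.congr ?_
      have hopen : {u : ℝ | u ≠ s} ∈ nhds t :=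
        isOpen_ne.mem_nhds hts
      filter_upwards [hopen] with u hu
      rw [hg, if_neg hu]
  have hgi : ∀ c d : ℝ, IntervalIntegrable (g s) MeasureTheory.volume c d :=
    fun c d => hgc.intervalIntegrable c d
  -- split
  have hsplit : ∫ t in a'..b', g s t =
      (∫ t in a'..a, g s t) + (∫ t in a..b, g s t) + (∫ t in b..b', g s t) := by
    rw [intervalIntegral.integral_add_adjacent_intervals (hgi a' a) (hgi a b),
      intervalIntegral.integral_add_adjacent_intervals
        ((hgi a' a).trans (hgi a b)) (hgi b b')]
  -- left piece
  have hleft : ∫ t in a'..a, g s t = f s * (Real.log (s - a') - Real.log (s - a)) := by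
    have hcongr : ∫ t in a'..a, g s t = ∫ t in a'..a, f s * (s - t)⁻¹ := by
      apply intervalIntegral.integral_congr_ae
      have hA : ∀ᵐ t : ℝ ∂MeasureTheory.volume, t ≠ a := by
        rw [MeasureTheory.ae_iff]
        simpa using MeasureTheory.measure_singleton a
      filter_upwards [hA] with t hta ht
      rw [uIoc_of_le ha'] at ht
      have hta' : t < a := lt_of_le_of_ne ht.2 hta
      have hts : t ≠ s := ne_of_lt (hta'.trans hsa)
      have hft : f t = 0 := hf0 t (fun hm => absurd hm.1 (not_le.mpr hta'))
      rw [hg, if_neg hts, hft, sub_zero, div_eq_mul_inv]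
    rw [hcongr, intervalIntegral.integral_const_mul, integral_inv_sub]
    intro t ht
    rw [uIcc_of_le ha'] at ht
    have : t < s := lt_of_le_of_lt ht.2 hsa
    exact ne_of_gt (sub_pos.mpr this)
  -- right piece
  have hright : ∫ t in b..b', g s t = f s * (Real.log (s - b) - Real.log (s - b')) := by
    have hcongr : ∫ t in b..b', g s t = ∫ t in b..b', f s * (s - t)⁻¹ := by
      apply intervalIntegral.integral_congr_ae
      filter_upwards with t ht
      rw [uIoc_of_le hb'] at ht
      have htb : b < t := ht.1
      have hts : t ≠ s := ne_of_gt (hsb.trans htb)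
      have hft : f t = 0 := hf0 t (fun hm => absurd hm.2 (not_le.mpr htb))
      rw [hg, if_neg hts, hft, sub_zero, div_eq_mul_inv]
    rw [hcongr, intervalIntegral.integral_const_mul, integral_inv_sub]
    intro t ht
    rw [uIcc_of_le hb'] at ht
    have : s < t := lt_of_lt_of_le hsb ht.1
    exact ne_of_lt (sub_neg.mpr this)
  -- final computation
  have hsa0 : (0:ℝ) < s - a := sub_pos.mpr hsa
  have hbs0 : (0:ℝ) < b - s := sub_pos.mpr hsb
  have hsa'0 : (0:ℝ) < s - a' := lt_of_lt_of_le hsa0 (by linarith)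
  have hb's0 : (0:ℝ) < b' - s := lt_of_lt_of_le hbs0 (by linarith)
  have e1 : Real.log ((s - a) / (b - s)) = Real.log (s - a) - Real.log (b - s) :=
    Real.log_div (ne_of_gt hsa0) (ne_of_gt hbs0)
  have e2 : Real.log ((s - a') / (b' - s)) = Real.log (s - a') - Real.log (b' - s) :=
    Real.log_div (ne_of_gt hsa'0) (ne_of_gt hb's0)
  have e3 : Real.log (s - b) = Real.log (b - s) := by
    rw [show s - b = -(b - s) by ring, Real.log_neg_eq_log]
  have e4 : Real.log (s - b') = Real.log (b' - s) := by
    rw [show s - b' = -(b' - s) by ring, Real.log_neg_eq_log]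
  rw [hsplit, hleft, hright, e1, e2, e3, e4]
  ring
end

section
/- Let Ω ⊆ ℂ be open and μ_t : Ω → ℝ. Let α_k : Ω → ℂ (k ≥ 0) be continuously differentiable with ∑_{k≥0} sup|α_k| and ∑_{k≥0} sup|∇α_k| finite on compact subsets of Ω, and suppose that for all z ∈ Ω and θ ∈ ℝ the function a(z,θ) = ∑_{k≥0} α_k(z) e^{ikθ} satisfies (cos θ, sin θ)·∇_z a(z,θ) = μ_t(z) a(z,θ). Let I_m : Ω → ℂ (m ≥ 0) be continuously differentiable with ∑_{m≥0} sup|I_m| and ∑_{m≥0} sup|∇I_m| finite on compacts, satisfying ∂̄I_m + ∂I_{m+2} + μ_t I_{m+1} = 0 on Ω for every m ≥ 0. Define J_m = ∑_{k=0}^{∞} α_k I_{m+k} for m ≥ 0. Then ∂̄J_m + ∂J_{m+2} = 0 on Ω for every m ≥ 0. -/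
open Complex

/-- The Wirtinger derivative `∂ = (∂_{x₁} - i ∂_{x₂})/2` of a (real-)differentiable
function `u : ℂ → ℂ`, where `z = x₁ + i x₂`. -/
noncomputable def wirtingerD (u : ℂ → ℂ) (z : ℂ) : ℂ :=
  (fderiv ℝ u z 1 - Complex.I * fderiv ℝ u z Complex.I) / 2

/-- The conjugate Wirtinger derivative `∂̄ = (∂_{x₁} + i ∂_{x₂})/2`. -/
noncomputable def wirtingerDBar (u : ℂ → ℂ) (z : ℂ) : ℂ :=
  (fderiv ℝ u z 1 + Complex.I * fderiv ℝ u z Complex.I) / 2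


open MeasureTheory

lemma tsum_clm_apply {S : ℕ → ℂ →L[ℝ] ℂ} (hS : Summable S) (v : ℂ) :
    (∑' k, S k) v = ∑' k, S k v := by
  simpa using (ContinuousLinearMap.apply ℝ ℂ v).map_tsum hS

lemma norm_exp_mul_I_of_real (c : ℂ) (hc : c.im = 0) : ‖Complex.exp (c * Complex.I)‖ = 1 := by
  rw [Complex.norm_exp]
  simp [Complex.mul_re, Complex.I_re, Complex.I_im, hc, Real.exp_zero]

lemma norm_wdbar_le (u : ℂ → ℂ) (z : ℂ) : ‖wirtingerDBar u z‖ ≤ ‖fderiv ℝ u z‖ := by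
  have h1 : ‖fderiv ℝ u z 1‖ ≤ ‖fderiv ℝ u z‖ := by
    simpa using (fderiv ℝ u z).le_opNorm 1
  have h2 : ‖fderiv ℝ u z Complex.I‖ ≤ ‖fderiv ℝ u z‖ := by
    simpa [Complex.norm_I] using (fderiv ℝ u z).le_opNorm Complex.I
  rw [wirtingerDBar, norm_div]
  have : ‖fderiv ℝ u z 1 + Complex.I * fderiv ℝ u z Complex.I‖ ≤ 2 * ‖fderiv ℝ u z‖ := by
    calc ‖fderiv ℝ u z 1 + Complex.I * fderiv ℝ u z Complex.I‖
        ≤ ‖fderiv ℝ u z 1‖ + ‖Complex.I * fderiv ℝ u z Complex.I‖ := norm_add_le _ _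
      _ = ‖fderiv ℝ u z 1‖ + ‖fderiv ℝ u z Complex.I‖ := by
          rw [norm_mul, Complex.norm_I, one_mul]
      _ ≤ ‖fderiv ℝ u z‖ + ‖fderiv ℝ u z‖ := add_le_add h1 h2
      _ = 2 * ‖fderiv ℝ u z‖ := by ring
  have h2' : ‖(2:ℂ)‖ = 2 := by norm_num
  rw [h2']
  linarith

lemma norm_wd_le (u : ℂ → ℂ) (z : ℂ) : ‖wirtingerD u z‖ ≤ ‖fderiv ℝ u z‖ := by
  have h1 : ‖fderiv ℝ u z 1‖ ≤ ‖fderiv ℝ u z‖ := by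
    simpa using (fderiv ℝ u z).le_opNorm 1
  have h2 : ‖fderiv ℝ u z Complex.I‖ ≤ ‖fderiv ℝ u z‖ := by
    simpa [Complex.norm_I] using (fderiv ℝ u z).le_opNorm Complex.I
  rw [wirtingerD, norm_div]
  have : ‖fderiv ℝ u z 1 - Complex.I * fderiv ℝ u z Complex.I‖ ≤ 2 * ‖fderiv ℝ u z‖ := by
    calc ‖fderiv ℝ u z 1 - Complex.I * fderiv ℝ u z Complex.I‖
        ≤ ‖fderiv ℝ u z 1‖ + ‖Complex.I * fderiv ℝ u z Complex.I‖ := norm_sub_le _ _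
      _ = ‖fderiv ℝ u z 1‖ + ‖fderiv ℝ u z Complex.I‖ := by
          rw [norm_mul, Complex.norm_I, one_mul]
      _ ≤ ‖fderiv ℝ u z‖ + ‖fderiv ℝ u z‖ := add_le_add h1 h2
      _ = 2 * ‖fderiv ℝ u z‖ := by ring
  have h2' : ‖(2:ℂ)‖ = 2 := by norm_num
  rw [h2']
  linarith

lemma clm_dir (L : ℂ →L[ℝ] ℂ) (θ : ℝ) :
    L ((Real.cos θ : ℂ) + (Real.sin θ : ℂ) * Complex.I) =
      Complex.exp (-(↑θ * Complex.I)) * ((L 1 + Complex.I * L Complex.I) / 2) +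
        Complex.exp (↑θ * Complex.I) * ((L 1 - Complex.I * L Complex.I) / 2) := by
  have h : ((Real.cos θ : ℂ) + (Real.sin θ : ℂ) * Complex.I) =
      (Real.cos θ) • (1:ℂ) + (Real.sin θ) • (Complex.I) := by
    simp [Complex.real_smul]
  rw [h, map_add, L.map_smul, L.map_smul]
  have he1 : Complex.exp (↑θ * Complex.I) = (Real.cos θ : ℂ) + (Real.sin θ : ℂ) * Complex.I := by
    rw [Complex.exp_mul_I, Complex.ofReal_cos, Complex.ofReal_sin]
  have he2 : Complex.exp (-(↑θ * Complex.I)) =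
      (Real.cos θ : ℂ) - (Real.sin θ : ℂ) * Complex.I := by
    rw [show -((θ:ℂ) * Complex.I) = (-(θ:ℂ)) * Complex.I by ring, Complex.exp_mul_I,
      Complex.cos_neg, Complex.sin_neg, Complex.ofReal_cos, Complex.ofReal_sin]
    ring
  rw [he1, he2, Complex.real_smul, Complex.real_smul]
  linear_combination ((Real.sin θ : ℂ) * L Complex.I) * Complex.I_sq

lemma integral_E (m : ℤ) :
    (∫ θ in Set.Ioc (0:ℝ) (2*Real.pi), Complex.exp ((m:ℂ) * (θ:ℂ) * Complex.I)) =
      if m = 0 then (2*(Real.pi:ℂ)) else 0 := by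
  have h2π : (0:ℝ) ≤ 2*Real.pi := by positivity
  rcases eq_or_ne m 0 with h | h
  · subst h
    simp only [Int.cast_zero, zero_mul, Complex.exp_zero, eq_self_iff_true, if_true]
    rw [setIntegral_const, Real.volume_real_Ioc_of_le h2π,
      Complex.real_smul]
    push_cast
    ring
  · rw [if_neg h, ← intervalIntegral.integral_of_le h2π]
    have hrw : ∀ θ : ℝ, (m:ℂ) * (θ:ℂ) * Complex.I = ((m:ℂ) * Complex.I) * (θ:ℂ) :=
      fun θ => by ring
    simp only [hrw]
    rw [integral_exp_mul_complex (mul_ne_zero (Int.cast_ne_zero.mpr h) Complex.I_ne_zero)]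
    rw [show ((m:ℂ) * Complex.I) * ((2*Real.pi : ℝ):ℂ) = (m:ℂ) * (2*(Real.pi:ℂ)*Complex.I) by
      push_cast; ring]
    rw [Complex.exp_int_mul_two_pi_mul_I]
    simp

lemma tsum_integral_zero (F : ℕ → ℝ → ℂ) (D : ℕ → ℝ) (hD : Summable D)
    (hcont : ∀ k, Continuous (F k)) (hbound : ∀ k θ, ‖F k θ‖ ≤ D k)
    (hzero : ∀ θ, ∑' k, F k θ = 0) :
    ∑' k, (∫ θ in Set.Ioc (0:ℝ) (2*Real.pi), F k θ) = 0 := by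
  have hint : ∀ k, IntegrableOn (F k) (Set.Ioc (0:ℝ) (2*Real.pi)) :=
    fun k => (hcont k).integrableOn_Ioc
  rw [integral_tsum_of_summable_integral_norm hint ?hsum]
  · simp only [hzero]
    exact integral_zero _ _
  case hsum =>
    apply Summable.of_nonneg_of_le (fun k => integral_nonneg fun θ => norm_nonneg _)
      _ (hD.mul_left (2*Real.pi))
    intro k
    calc (∫ θ in Set.Ioc (0:ℝ) (2*Real.pi), ‖F k θ‖)
        ≤ ∫ _θ in Set.Ioc (0:ℝ) (2*Real.pi), D k := by
          apply integral_mono (hint k).norm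
          · exact integrableOn_const measure_Ioc_lt_top.ne
          · exact fun θ => hbound k θ
      _ = (2*Real.pi) * D k := by
          rw [setIntegral_const, Real.volume_real_Ioc_of_le (by positivity),
            smul_eq_mul]
          ring

lemma modes (pb p a : ℕ → ℂ) (μ : ℂ) (C : ℕ → ℝ) (hC : Summable C)
    (hb1 : ∀ k, ‖pb k‖ ≤ C k) (hb2 : ∀ k, ‖p k‖ ≤ C k) (hb3 : ∀ k, ‖a k‖ ≤ C k)
    (h : ∀ θ : ℝ, ∑' k, ((Complex.exp (-(↑θ * Complex.I)) * pb k +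
          Complex.exp (↑θ * Complex.I) * p k) * Complex.exp ((k:ℂ) * (θ:ℂ) * Complex.I)
        - μ * a k * Complex.exp ((k:ℂ) * (θ:ℂ) * Complex.I)) = 0) :
    pb 0 = 0 ∧ pb 1 = μ * a 0 ∧ ∀ n : ℕ, pb (n + 2) + p n = μ * a (n + 1) := by
  -- the elementary exponentials
  set e : ℤ → ℝ → ℂ := fun n θ => Complex.exp ((n:ℂ) * (θ:ℂ) * Complex.I) with he
  have he_mul : ∀ (n n' : ℤ) (θ : ℝ), e n θ * e n' θ = e (n + n') θ := by
    intro n n' θ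
    rw [he]
    simp only []
    rw [← Complex.exp_add]
    congr 1
    push_cast
    ring
  have he_norm : ∀ (n : ℤ) (θ : ℝ), ‖e n θ‖ = 1 := by
    intro n θ
    exact norm_exp_mul_I_of_real ((n:ℂ) * (θ:ℂ)) (by simp)
  have he_cont : ∀ n : ℤ, Continuous (e n) := by
    intro n
    apply Complex.continuous_exp.comp
    fun_prop
  have hem1 : ∀ θ : ℝ, Complex.exp (-(↑θ * Complex.I)) = e (-1) θ := by
    intro θ; rw [he]; congr 1; push_cast; ring
  have hep1 : ∀ θ : ℝ, Complex.exp (↑θ * Complex.I) = e 1 θ := by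
    intro θ; rw [he]; congr 1; push_cast; ring
  have hek : ∀ (k : ℕ) (θ : ℝ), Complex.exp ((k:ℂ) * (θ:ℂ) * Complex.I) = e (k:ℤ) θ := by
    intro k θ; rw [he]; norm_cast
  have hπ : (2*(Real.pi:ℂ)) ≠ 0 := by
    simp [Real.pi_ne_zero, Complex.ofReal_ne_zero]
  -- key extraction for every integer weight w
  have key : ∀ w : ℤ, ∑' k : ℕ,
      (pb k * (if ((k:ℤ) - 1 + w) = 0 then (2*(Real.pi:ℂ)) else 0)
       + p k * (if ((k:ℤ) + 1 + w) = 0 then (2*(Real.pi:ℂ)) else 0)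
       - μ * a k * (if ((k:ℤ) + w) = 0 then (2*(Real.pi:ℂ)) else 0)) = 0 := by
    intro w
    set F : ℕ → ℝ → ℂ := fun k θ =>
      ((Complex.exp (-(↑θ * Complex.I)) * pb k + Complex.exp (↑θ * Complex.I) * p k) *
        Complex.exp ((k:ℂ) * (θ:ℂ) * Complex.I)
        - μ * a k * Complex.exp ((k:ℂ) * (θ:ℂ) * Complex.I)) * e w θ with hF
    have hFe : ∀ (k : ℕ) (θ : ℝ), F k θ =
        pb k * e ((k:ℤ) - 1 + w) θ + p k * e ((k:ℤ) + 1 + w) θ - μ * a k * e ((k:ℤ) + w) θ := by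
      intro k θ
      calc F k θ = pb k * (e (-1) θ * (e (k:ℤ) θ * e w θ))
            + p k * (e 1 θ * (e (k:ℤ) θ * e w θ)) - μ * a k * (e (k:ℤ) θ * e w θ) := by
            rw [hF]; simp only []; rw [hem1, hep1, hek]; ring
        _ = _ := by
            rw [he_mul (k:ℤ) w, he_mul (-1) ((k:ℤ) + w), he_mul 1 ((k:ℤ) + w),
              show (-1 + ((k:ℤ) + w)) = (k:ℤ) - 1 + w by ring,
              show (1 + ((k:ℤ) + w)) = (k:ℤ) + 1 + w by ring]
    have hcont : ∀ k, Continuous (F k) := by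
      intro k
      rw [hF]
      simp only []
      apply Continuous.mul _ (he_cont w)
      apply Continuous.sub
      · apply Continuous.mul
        · apply Continuous.add
          · apply Continuous.mul _ continuous_const
            apply Complex.continuous_exp.comp
            fun_prop
          · apply Continuous.mul _ continuous_const
            apply Complex.continuous_exp.comp
            fun_prop
        · apply Complex.continuous_exp.comp; fun_prop
      · apply Continuous.mul continuous_const
        apply Complex.continuous_exp.comp; fun_prop
    have hbound : ∀ k θ, ‖F k θ‖ ≤ (2 + ‖μ‖) * C k := by
      intro k θ
      rw [hFe]
      have h1 : ‖pb k * e ((k:ℤ) - 1 + w) θ‖ ≤ C k := by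
        rw [norm_mul, he_norm, mul_one]; exact hb1 k
      have h2 : ‖p k * e ((k:ℤ) + 1 + w) θ‖ ≤ C k := by
        rw [norm_mul, he_norm, mul_one]; exact hb2 k
      have h3 : ‖μ * a k * e ((k:ℤ) + w) θ‖ ≤ ‖μ‖ * C k := by
        rw [norm_mul, he_norm, mul_one, norm_mul]
        exact mul_le_mul_of_nonneg_left (hb3 k) (norm_nonneg μ)
      calc ‖_ - _‖ ≤ ‖pb k * e ((k:ℤ) - 1 + w) θ + p k * e ((k:ℤ) + 1 + w) θ‖
            + ‖μ * a k * e ((k:ℤ) + w) θ‖ := norm_sub_le _ _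
        _ ≤ (‖pb k * e ((k:ℤ) - 1 + w) θ‖ + ‖p k * e ((k:ℤ) + 1 + w) θ‖)
            + ‖μ * a k * e ((k:ℤ) + w) θ‖ := by gcongr; exact norm_add_le _ _
        _ ≤ (C k + C k) + ‖μ‖ * C k := by gcongr
        _ = (2 + ‖μ‖) * C k := by ring
    have hzero : ∀ θ, ∑' k, F k θ = 0 := by
      intro θ
      rw [hF]
      simp only []
      rw [tsum_mul_right, h θ, zero_mul]
    have h0 := tsum_integral_zero F (fun k => (2 + ‖μ‖) * C k) (hC.mul_left _) hcont hbound hzero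
    rw [tsum_congr (fun k => ?_)] at h0
    · exact h0
    · show (∫ θ in Set.Ioc (0:ℝ) (2*Real.pi), F k θ) = _
      rw [show (fun θ => F k θ) = fun θ => pb k * e ((k:ℤ) - 1 + w) θ
          + p k * e ((k:ℤ) + 1 + w) θ - μ * a k * e ((k:ℤ) + w) θ from funext (hFe k)]
      have hint : ∀ n : ℤ, IntegrableOn (fun θ => e n θ) (Set.Ioc (0:ℝ) (2*Real.pi)) :=
        fun n => (he_cont n).integrableOn_Ioc
      have hiE : ∀ (c : ℂ) (n : ℤ), (∫ θ in Set.Ioc (0:ℝ) (2*Real.pi), c * e n θ)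
          = c * (if n = 0 then (2*(Real.pi:ℂ)) else 0) := by
        intro c n
        rw [integral_const_mul]
        congr 1
        rw [he]
        exact integral_E n
      have hI1 : IntegrableOn (fun θ => pb k * e ((k:ℤ) - 1 + w) θ
          + p k * e ((k:ℤ) + 1 + w) θ) (Set.Ioc (0:ℝ) (2*Real.pi)) :=
        ((hint ((k:ℤ) - 1 + w)).const_mul (pb k)).add ((hint ((k:ℤ) + 1 + w)).const_mul (p k))
      have hI2 : IntegrableOn (fun θ => pb k * e ((k:ℤ) - 1 + w) θ)
          (Set.Ioc (0:ℝ) (2*Real.pi)) := (hint ((k:ℤ) - 1 + w)).const_mul (pb k)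
      have hI3 : IntegrableOn (fun θ => p k * e ((k:ℤ) + 1 + w) θ)
          (Set.Ioc (0:ℝ) (2*Real.pi)) := (hint ((k:ℤ) + 1 + w)).const_mul (p k)
      rw [integral_sub hI1 ((hint ((k:ℤ) + w)).const_mul (μ * a k)),
        integral_add hI2 hI3, hiE, hiE, hiE]
  refine ⟨?_, ?_, ?_⟩
  · -- pb 0 = 0, weight w = 1
    have h1 := key 1
    rw [tsum_eq_single 0 (fun k hk => ?_)] at h1
    · simp only [Nat.cast_zero] at h1
      norm_num at h1
      exact h1
    · have hk' : (1:ℤ) ≤ (k:ℤ) := by exact_mod_cast Nat.one_le_iff_ne_zero.mpr hk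
      rw [if_neg (by omega), if_neg (by omega), if_neg (by omega)]
      ring
  · -- pb 1 = μ * a 0, weight w = 0
    have h1 := key 0
    rw [tsum_eq_sum (s := ({0, 1} : Finset ℕ)) (fun k hk => ?_)] at h1
    · rw [Finset.sum_insert (by simp), Finset.sum_singleton] at h1
      simp only [Nat.cast_zero, Nat.cast_one] at h1
      norm_num at h1
      have h2 : (pb 1 - μ * a 0) * (2*(Real.pi:ℂ)) = 0 := by linear_combination h1
      rcases mul_eq_zero.mp h2 with h3 | h3
      · linear_combination h3
      · exact absurd h3 hπ
    · simp only [Finset.mem_insert, Finset.mem_singleton] at hk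
      push_neg at hk
      have hk2 : (2:ℤ) ≤ (k:ℤ) := by omega
      rw [if_neg (by omega), if_neg (by omega), if_neg (by omega)]
      ring
  · -- pb (n+2) + p n = μ * a (n+1), weight w = -(n+1)
    intro n
    have h1 := key (-(n+1 : ℤ))
    rw [tsum_eq_sum (s := ({n, n+1, n+2} : Finset ℕ)) (fun k hk => ?_)] at h1
    · rw [Finset.sum_insert (by simp), Finset.sum_insert (by simp), Finset.sum_singleton] at h1
      rw [if_neg (by push_cast; omega), if_pos (by push_cast; omega), if_neg (by push_cast; omega),
        if_neg (by push_cast; omega), if_neg (by push_cast; omega), if_pos (by push_cast; omega),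
        if_pos (by push_cast; omega), if_neg (by push_cast; omega), if_neg (by push_cast; omega)]
        at h1
      have h2 : (pb (n+2) + p n - μ * a (n+1)) * (2*(Real.pi:ℂ)) = 0 := by
        linear_combination h1
      rcases mul_eq_zero.mp h2 with h3 | h3
      · linear_combination h3
      · exact absurd h3 hπ
    · simp only [Finset.mem_insert, Finset.mem_singleton] at hk
      push_neg at hk
      obtain ⟨hk1, hk2, hk3⟩ := hk
      have e1 : (k:ℤ) ≠ n := by exact_mod_cast fun hh => hk1 (by exact_mod_cast hh)
      have e2 : (k:ℤ) ≠ n+1 := by exact_mod_cast fun hh => hk2 (by exact_mod_cast hh)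
      have e3 : (k:ℤ) ≠ n+2 := by exact_mod_cast fun hh => hk3 (by exact_mod_cast hh)
      rw [if_neg (by omega), if_neg (by omega), if_neg (by omega)]
      ring

set_option maxHeartbeats 1000000

/-- If `a(z,θ) = ∑_{k≥0} α_k(z) e^{ikθ}` satisfies
`ξ(θ)·∇_z a = μ_t a` on an open set `Ω ⊆ ℂ`, and `(I_m)_{m≥0}` solves the attenuated
system `∂̄I_m + ∂I_{m+2} + μ_t I_{m+1} = 0` on `Ω`, then the convolution
`J_m = ∑_{k≥0} α_k I_{m+k}` solves the attenuation-free system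
`∂̄J_m + ∂J_{m+2} = 0` on `Ω`. -/
theorem stmt_14 (Ω : Set ℂ) (hΩ : IsOpen Ω) (μt : ℂ → ℝ)
    (α : ℕ → ℂ → ℂ) (I : ℕ → ℂ → ℂ)
    (hαdiff : ∀ k : ℕ, ContDiffOn ℝ 1 (α k) Ω)
    (hαsum : ∀ Kc : Set ℂ, Kc ⊆ Ω → IsCompact Kc →
      ∃ C : ℕ → ℝ, Summable C ∧ ∀ k : ℕ, ∀ z ∈ Kc,
        ‖α k z‖ ≤ C k ∧ ‖fderiv ℝ (α k) z‖ ≤ C k)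
    (ha : ∀ z ∈ Ω, ∀ θ : ℝ,
      fderiv ℝ (fun w : ℂ => ∑' k : ℕ, α k w * Complex.exp ((k : ℂ) * (θ : ℂ) * Complex.I))
          z ((Real.cos θ : ℂ) + (Real.sin θ : ℂ) * Complex.I)
        = (μt z : ℂ) * ∑' k : ℕ, α k z * Complex.exp ((k : ℂ) * (θ : ℂ) * Complex.I))
    (hIdiff : ∀ m : ℕ, ContDiffOn ℝ 1 (I m) Ω)
    (hIsum : ∀ Kc : Set ℂ, Kc ⊆ Ω → IsCompact Kc →
      ∃ C : ℕ → ℝ, Summable C ∧ ∀ m : ℕ, ∀ z ∈ Kc,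
        ‖I m z‖ ≤ C m ∧ ‖fderiv ℝ (I m) z‖ ≤ C m)
    (hIsys : ∀ m : ℕ, ∀ z ∈ Ω,
      wirtingerDBar (I m) z + wirtingerD (I (m + 2)) z + (μt z : ℂ) * I (m + 1) z = 0)
    (J : ℕ → ℂ → ℂ)
    (hJ : ∀ m : ℕ, ∀ z : ℂ, J m z = ∑' k : ℕ, α k z * I (m + k) z) :
    ∀ m : ℕ, ∀ z ∈ Ω,
      wirtingerDBar (J m) z + wirtingerD (J (m + 2)) z = 0 := by
  intro m z hz
  -- a closed ball around z inside Ω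
  obtain ⟨ε, hε, hball⟩ : ∃ ε > 0, Metric.closedBall z ε ⊆ Ω := by
    obtain ⟨δ, hδ, h⟩ := Metric.isOpen_iff.mp hΩ z hz
    exact ⟨δ/2, by positivity, (Metric.closedBall_subset_ball (by linarith)).trans h⟩
  obtain ⟨Ca, hCa, hCab⟩ := hαsum _ hball (isCompact_closedBall z ε)
  obtain ⟨Ci, hCi, hCib⟩ := hIsum _ hball (isCompact_closedBall z ε)
  have hzball : z ∈ Metric.closedBall z ε := Metric.mem_closedBall_self hε.le
  have hzb : z ∈ Metric.ball z ε := Metric.mem_ball_self hε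
  have hCa0 : ∀ k, 0 ≤ Ca k := fun k => (norm_nonneg _).trans (hCab k z hzball).1
  have hCi0 : ∀ k, 0 ≤ Ci k := fun k => (norm_nonneg _).trans (hCib k z hzball).1
  set B := ∑' k, Ci k with hB
  have hCiB : ∀ k, Ci k ≤ B := fun k => hCi.le_tsum k (fun j _ => hCi0 j)
  have hB0 : 0 ≤ B := tsum_nonneg hCi0
  have hballsub : Metric.ball z ε ⊆ Metric.closedBall z ε := Metric.ball_subset_closedBall
  -- differentiability
  have hdiffα : ∀ k, ∀ w ∈ Metric.ball z ε, HasFDerivAt (α k) (fderiv ℝ (α k) w) w := by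
    intro k w hw
    exact (((hαdiff k).contDiffAt (hΩ.mem_nhds (hball (hballsub hw)))).differentiableAt
      one_ne_zero).hasFDerivAt
  have hdiffI : ∀ n, ∀ w ∈ Metric.ball z ε, HasFDerivAt (I n) (fderiv ℝ (I n) w) w := by
    intro n w hw
    exact (((hIdiff n).contDiffAt (hΩ.mem_nhds (hball (hballsub hw)))).differentiableAt
      one_ne_zero).hasFDerivAt
  -- STEP B : mode identities for α
  have key : ∀ θ : ℝ, ∑' k, ((Complex.exp (-(↑θ * Complex.I)) * wirtingerDBar (α k) z +
        Complex.exp (↑θ * Complex.I) * wirtingerD (α k) z) *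
          Complex.exp ((k:ℂ) * (θ:ℂ) * Complex.I)
      - (μt z : ℂ) * α k z * Complex.exp ((k:ℂ) * (θ:ℂ) * Complex.I)) = 0 := by
    intro θ
    have hcnorm : ∀ k : ℕ, ‖Complex.exp ((k:ℂ) * (θ:ℂ) * Complex.I)‖ = 1 := by
      intro k
      rw [show ((k:ℂ) * (θ:ℂ) * Complex.I) = (((k*θ : ℝ)):ℂ) * Complex.I by push_cast; ring]
      exact Complex.norm_exp_ofReal_mul_I _
    have hf' : ∀ (k : ℕ), ∀ w ∈ Metric.ball z ε,
        ‖Complex.exp ((k:ℂ) * (θ:ℂ) * Complex.I) • fderiv ℝ (α k) w‖ ≤ Ca k := by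
      intro k w hw
      rw [norm_smul, hcnorm, one_mul]
      exact (hCab k w (hballsub hw)).2
    have hf0 : Summable (fun k : ℕ => α k z * Complex.exp ((k:ℂ) * (θ:ℂ) * Complex.I)) := by
      apply Summable.of_norm_bounded hCa
      intro k
      rw [norm_mul, hcnorm, mul_one]
      exact (hCab k z hzball).1
    have hder : HasFDerivAt
        (fun w : ℂ => ∑' k : ℕ, α k w * Complex.exp ((k : ℂ) * (θ : ℂ) * Complex.I))
        (∑' k : ℕ, Complex.exp ((k : ℂ) * (θ : ℂ) * Complex.I) • fderiv ℝ (α k) z) z :=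
      hasFDerivAt_tsum_of_isPreconnected hCa Metric.isOpen_ball
        ((convex_ball z ε).isPreconnected)
        (fun k w hw => (hdiffα k w hw).mul_const _) hf' hzb hf0 hzb
    have hS : Summable (fun k : ℕ => Complex.exp ((k : ℂ) * (θ : ℂ) * Complex.I) •
        fderiv ℝ (α k) z) := by
      apply Summable.of_norm_bounded hCa
      intro k
      rw [norm_smul, hcnorm, one_mul]
      exact (hCab k z hzball).2
    have hα1 : Summable (fun k : ℕ => (Complex.exp (-(↑θ * Complex.I)) * wirtingerDBar (α k) z +
        Complex.exp (↑θ * Complex.I) * wirtingerD (α k) z) *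
          Complex.exp ((k:ℂ) * (θ:ℂ) * Complex.I)) := by
      apply Summable.of_norm_bounded (g := fun k => 2 * Ca k) (hCa.mul_left 2)
      intro k
      rw [norm_mul, hcnorm, mul_one]
      have hn1 : ‖Complex.exp (-(↑θ * Complex.I))‖ = 1 := by
        rw [show (-((θ:ℂ) * Complex.I)) = (((-θ : ℝ)):ℂ) * Complex.I by push_cast; ring]
        exact Complex.norm_exp_ofReal_mul_I _
      have hn2 : ‖Complex.exp ((θ:ℂ) * Complex.I)‖ = 1 := Complex.norm_exp_ofReal_mul_I θ
      calc ‖_ + _‖ ≤ ‖Complex.exp (-(↑θ * Complex.I)) * wirtingerDBar (α k) z‖ +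
            ‖Complex.exp (↑θ * Complex.I) * wirtingerD (α k) z‖ := norm_add_le _ _
        _ = ‖wirtingerDBar (α k) z‖ + ‖wirtingerD (α k) z‖ := by
            rw [norm_mul, norm_mul, hn1, hn2, one_mul, one_mul]
        _ ≤ Ca k + Ca k := add_le_add
            ((norm_wdbar_le _ _).trans (hCab k z hzball).2)
            ((norm_wd_le _ _).trans (hCab k z hzball).2)
        _ = 2 * Ca k := by ring
    have hα2 : Summable (fun k : ℕ => (μt z : ℂ) * α k z *
        Complex.exp ((k:ℂ) * (θ:ℂ) * Complex.I)) := by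
      apply Summable.of_norm_bounded (g := fun k => ‖(μt z : ℂ)‖ * Ca k) (hCa.mul_left _)
      intro k
      rw [norm_mul, hcnorm, mul_one, norm_mul]
      exact mul_le_mul_of_nonneg_left (hCab k z hzball).1 (norm_nonneg _)
    have hha := ha z hz θ
    rw [hder.fderiv, tsum_clm_apply hS] at hha
    rw [Summable.tsum_sub hα1 hα2, sub_eq_zero]
    rw [← tsum_mul_left] at hha
    have hassoc : ∑' (x : ℕ), (μt z : ℂ) * (α x z * Complex.exp ((x:ℂ) * (θ:ℂ) * Complex.I))
        = ∑' (x : ℕ), (μt z : ℂ) * α x z * Complex.exp ((x:ℂ) * (θ:ℂ) * Complex.I) :=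
      tsum_congr fun k => by ring
    rw [← hassoc, ← hha]
    apply tsum_congr
    intro k
    rw [ContinuousLinearMap.smul_apply, smul_eq_mul, clm_dir]
    rw [wirtingerDBar, wirtingerD]
    ring
  obtain ⟨hpb0, hpb1, hpbn⟩ := modes (fun k => wirtingerDBar (α k) z)
    (fun k => wirtingerD (α k) z) (fun k => α k z) ((μt z : ℂ)) Ca hCa
    (fun k => (norm_wdbar_le _ _).trans (hCab k z hzball).2)
    (fun k => (norm_wd_le _ _).trans (hCab k z hzball).2)
    (fun k => (hCab k z hzball).1) key
  -- STEP C : termwise derivative of J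
  have hu : Summable (fun k => Ca k * B + B * Ca k) := (hCa.mul_right B).add (hCa.mul_left B)
  have hfb : ∀ (m' : ℕ) (k : ℕ), ∀ w ∈ Metric.ball z ε,
      ‖α k w • fderiv ℝ (I (m'+k)) w + I (m'+k) w • fderiv ℝ (α k) w‖ ≤ Ca k * B + B * Ca k := by
    intro m' k w hw
    calc ‖_ + _‖ ≤ ‖α k w • fderiv ℝ (I (m'+k)) w‖ + ‖I (m'+k) w • fderiv ℝ (α k) w‖ :=
          norm_add_le _ _
      _ = ‖α k w‖ * ‖fderiv ℝ (I (m'+k)) w‖ + ‖I (m'+k) w‖ * ‖fderiv ℝ (α k) w‖ := by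
          rw [norm_smul, norm_smul]
      _ ≤ Ca k * B + B * Ca k := by
          apply add_le_add
          · exact mul_le_mul (hCab k w (hballsub hw)).1
              ((hCib (m'+k) w (hballsub hw)).2.trans (hCiB _)) (norm_nonneg _) (hCa0 k)
          · exact mul_le_mul ((hCib (m'+k) w (hballsub hw)).1.trans (hCiB _))
              (hCab k w (hballsub hw)).2 (norm_nonneg _) hB0
  have hJder : ∀ m' : ℕ, HasFDerivAt (J m')
      (∑' k : ℕ, (α k z • fderiv ℝ (I (m'+k)) z + I (m'+k) z • fderiv ℝ (α k) z)) z := by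
    intro m'
    rw [show J m' = fun w => ∑' k : ℕ, α k w * I (m'+k) w from funext (hJ m')]
    have hf0 : Summable (fun k : ℕ => α k z * I (m'+k) z) := by
      apply Summable.of_norm_bounded (g := fun k => Ca k * B) (hCa.mul_right B)
      intro k
      rw [norm_mul]
      exact mul_le_mul (hCab k z hzball).1 ((hCib (m'+k) z hzball).1.trans (hCiB _))
        (norm_nonneg _) (hCa0 k)
    exact hasFDerivAt_tsum_of_isPreconnected hu Metric.isOpen_ball
      ((convex_ball z ε).isPreconnected)
      (fun k w hw => (hdiffα k w hw).mul (hdiffI (m'+k) w hw))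
      (fun k w hw => hfb m' k w hw) hzb hf0 hzb
  have hSm : ∀ m' : ℕ, Summable (fun k : ℕ =>
      α k z • fderiv ℝ (I (m'+k)) z + I (m'+k) z • fderiv ℝ (α k) z) :=
    fun m' => Summable.of_norm_bounded hu (fun k => hfb m' k z hzb)
  have happ : ∀ (m' : ℕ) (v : ℂ), fderiv ℝ (J m') z v =
      ∑' k : ℕ, (α k z * fderiv ℝ (I (m'+k)) z v + I (m'+k) z * fderiv ℝ (α k) z v) := by
    intro m' v
    rw [(hJder m').fderiv, tsum_clm_apply (hSm m')]
    apply tsum_congr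
    intro k
    simp [ContinuousLinearMap.add_apply, ContinuousLinearMap.smul_apply, smul_eq_mul]
  have happs : ∀ (m' : ℕ) (v : ℂ), ‖v‖ = 1 → Summable (fun k : ℕ =>
      α k z * fderiv ℝ (I (m'+k)) z v + I (m'+k) z * fderiv ℝ (α k) z v) := by
    intro m' v hv
    apply Summable.of_norm_bounded hu
    intro k
    have : (α k z * fderiv ℝ (I (m'+k)) z v + I (m'+k) z * fderiv ℝ (α k) z v)
        = (α k z • fderiv ℝ (I (m'+k)) z + I (m'+k) z • fderiv ℝ (α k) z) v := by
      simp [ContinuousLinearMap.add_apply, ContinuousLinearMap.smul_apply, smul_eq_mul]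
    rw [this]
    calc ‖_‖ ≤ ‖α k z • fderiv ℝ (I (m'+k)) z + I (m'+k) z • fderiv ℝ (α k) z‖ * ‖v‖ :=
          ContinuousLinearMap.le_opNorm _ v
      _ = ‖α k z • fderiv ℝ (I (m'+k)) z + I (m'+k) z • fderiv ℝ (α k) z‖ := by
          rw [hv, mul_one]
      _ ≤ Ca k * B + B * Ca k := hfb m' k z hzb
  -- wirtinger derivatives of J as series
  have hwbar : wirtingerDBar (J m) z = ∑' k : ℕ,
      ((α k z * fderiv ℝ (I (m+k)) z 1 + I (m+k) z * fderiv ℝ (α k) z 1) +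
        Complex.I * (α k z * fderiv ℝ (I (m+k)) z Complex.I +
          I (m+k) z * fderiv ℝ (α k) z Complex.I)) / 2 := by
    rw [wirtingerDBar, happ m 1, happ m Complex.I, ← tsum_mul_left,
      ← Summable.tsum_add (happs m 1 (by norm_num)) ((happs m Complex.I (by simp)).mul_left Complex.I),
      ← tsum_div_const]
  have hwd : wirtingerD (J (m+2)) z = ∑' k : ℕ,
      ((α k z * fderiv ℝ (I (m+2+k)) z 1 + I (m+2+k) z * fderiv ℝ (α k) z 1) -
        Complex.I * (α k z * fderiv ℝ (I (m+2+k)) z Complex.I +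
          I (m+2+k) z * fderiv ℝ (α k) z Complex.I)) / 2 := by
    rw [wirtingerD, happ (m+2) 1, happ (m+2) Complex.I, ← tsum_mul_left,
      ← Summable.tsum_sub (happs (m+2) 1 (by norm_num))
        ((happs (m+2) Complex.I (by simp)).mul_left Complex.I),
      ← tsum_div_const]
  -- summability of both series of terms
  have hsum1 : Summable (fun k : ℕ =>
      ((α k z * fderiv ℝ (I (m+k)) z 1 + I (m+k) z * fderiv ℝ (α k) z 1) +
        Complex.I * (α k z * fderiv ℝ (I (m+k)) z Complex.I +
          I (m+k) z * fderiv ℝ (α k) z Complex.I)) / 2) :=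
    (((happs m 1 (by norm_num)).add ((happs m Complex.I (by simp)).mul_left Complex.I)).div_const 2)
  have hsum2 : Summable (fun k : ℕ =>
      ((α k z * fderiv ℝ (I (m+2+k)) z 1 + I (m+2+k) z * fderiv ℝ (α k) z 1) -
        Complex.I * (α k z * fderiv ℝ (I (m+2+k)) z Complex.I +
          I (m+2+k) z * fderiv ℝ (α k) z Complex.I)) / 2) :=
    (((happs (m+2) 1 (by norm_num)).sub
      ((happs (m+2) Complex.I (by simp)).mul_left Complex.I)).div_const 2)
  rw [hwbar, hwd, ← Summable.tsum_add hsum1 hsum2]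
  -- rewrite the summand using the transport equation for I
  have hterm : ∀ k : ℕ,
      (((α k z * fderiv ℝ (I (m+k)) z 1 + I (m+k) z * fderiv ℝ (α k) z 1) +
        Complex.I * (α k z * fderiv ℝ (I (m+k)) z Complex.I +
          I (m+k) z * fderiv ℝ (α k) z Complex.I)) / 2 +
      ((α k z * fderiv ℝ (I (m+2+k)) z 1 + I (m+2+k) z * fderiv ℝ (α k) z 1) -
        Complex.I * (α k z * fderiv ℝ (I (m+2+k)) z Complex.I +
          I (m+2+k) z * fderiv ℝ (α k) z Complex.I)) / 2)
      = wirtingerDBar (α k) z * I (m+k) z + wirtingerD (α k) z * I (m+k+2) z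
        - (μt z : ℂ) * α k z * I (m+k+1) z := by
    intro k
    have hidx : m + 2 + k = m + k + 2 := by omega
    rw [hidx]
    have hsys := hIsys (m+k) z hz
    rw [wirtingerDBar, wirtingerD] at hsys
    rw [wirtingerDBar, wirtingerD]
    linear_combination (α k z) * hsys
  rw [tsum_congr hterm]
  -- final reindexing
  have sPB : Summable (fun k : ℕ => wirtingerDBar (α k) z * I (m+k) z) := by
    apply Summable.of_norm_bounded (g := fun k => Ca k * B) (hCa.mul_right B)
    intro k
    rw [norm_mul]
    exact mul_le_mul ((norm_wdbar_le _ _).trans (hCab k z hzball).2)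
      ((hCib (m+k) z hzball).1.trans (hCiB _)) (norm_nonneg _) (hCa0 k)
  have sP : Summable (fun k : ℕ => wirtingerD (α k) z * I (m+k+2) z) := by
    apply Summable.of_norm_bounded (g := fun k => Ca k * B) (hCa.mul_right B)
    intro k
    rw [norm_mul]
    exact mul_le_mul ((norm_wd_le _ _).trans (hCab k z hzball).2)
      ((hCib (m+k+2) z hzball).1.trans (hCiB _)) (norm_nonneg _) (hCa0 k)
  have sA : Summable (fun k : ℕ => (μt z : ℂ) * α k z * I (m+k+1) z) := by
    apply Summable.of_norm_bounded (g := fun k => ‖(μt z : ℂ)‖ * (Ca k * B))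
      ((hCa.mul_right B).mul_left _)
    intro k
    rw [norm_mul, norm_mul]
    rw [mul_assoc]
    apply mul_le_mul_of_nonneg_left _ (norm_nonneg _)
    exact mul_le_mul (hCab k z hzball).1 ((hCib (m+k+1) z hzball).1.trans (hCiB _))
      (norm_nonneg _) (hCa0 k)
  rw [Summable.tsum_sub (sPB.add sP) sA, Summable.tsum_add sPB sP]
  have hshift : ∑' k : ℕ, wirtingerDBar (α k) z * I (m+k) z =
      ∑' k : ℕ, wirtingerDBar (α (k+1)) z * I (m+(k+1)) z := by
    rw [Summable.tsum_eq_zero_add sPB, hpb0, zero_mul, zero_add]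
  rw [hshift]
  have sPB' : Summable (fun k : ℕ => wirtingerDBar (α (k+1)) z * I (m+(k+1)) z) :=
    (summable_nat_add_iff 1).mpr sPB
  have hpb1' : wirtingerDBar (α 1) z = (μt z : ℂ) * α 0 z := hpb1
  have hpbn' : ∀ n : ℕ, wirtingerDBar (α (n+2)) z + wirtingerD (α n) z
      = (μt z : ℂ) * α (n+1) z := hpbn
  have hgsum : Summable (fun k : ℕ => wirtingerDBar (α (k+1)) z * I (m+(k+1)) z
      - (μt z : ℂ) * α k z * I (m+k+1) z) := sPB'.sub sA
  have hfin : (∑' k : ℕ, wirtingerDBar (α (k+1)) z * I (m+(k+1)) z)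
      - ∑' k : ℕ, (μt z : ℂ) * α k z * I (m+k+1) z
      = - ∑' k : ℕ, wirtingerD (α k) z * I (m+k+2) z :=
    calc (∑' k : ℕ, wirtingerDBar (α (k+1)) z * I (m+(k+1)) z)
        - ∑' k : ℕ, (μt z : ℂ) * α k z * I (m+k+1) z
        = ∑' k : ℕ, (wirtingerDBar (α (k+1)) z * I (m+(k+1)) z
            - (μt z : ℂ) * α k z * I (m+k+1) z) := (Summable.tsum_sub sPB' sA).symm
      _ = (wirtingerDBar (α 1) z * I (m+1) z - (μt z : ℂ) * α 0 z * I (m+1) z)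
          + ∑' k : ℕ, (wirtingerDBar (α (k+2)) z * I (m+k+2) z
            - (μt z : ℂ) * α (k+1) z * I (m+k+2) z) := by
          rw [Summable.tsum_eq_zero_add hgsum]
          congr 1
      _ = 0 + ∑' k : ℕ, -(wirtingerD (α k) z * I (m+k+2) z) := by
          congr 1
          · rw [hpb1']; ring
          · exact tsum_congr fun k => by linear_combination (I (m+k+2) z) * hpbn' k
      _ = - ∑' k : ℕ, wirtingerD (α k) z * I (m+k+2) z := by rw [zero_add, tsum_neg]
  linear_combination hfin
end

section
/- Let Ω ⊆ ℂ be open and μ_t : Ω → ℝ. Let β_k : Ω → ℂ (k ≥ 0) be continuously differentiable with ∑_{k≥0} sup|β_k| and ∑_{k≥0} sup|∇β_k| finite on compact subsets of Ω, and suppose that for all z ∈ Ω and θ ∈ ℝ the function b(z,θ) = ∑_{k≥0} β_k(z) e^{ikθ} satisfies (cos θ, sin θ)·∇_z b(z,θ) = −μ_t(z) b(z,θ). Let J_m : Ω → ℂ (m ≥ 0) be continuously differentiable with ∑_{m≥0} sup|J_m| and ∑_{m≥0} sup|∇J_m| finite on compacts, satisfying ∂̄J_m + ∂J_{m+2} =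 0 on Ω for every m ≥ 0. Define I_m = ∑_{k=0}^{∞} β_k J_{m+k} for m ≥ 0. Then ∂̄I_m + ∂I_{m+2} + μ_t I_{m+1} = 0 on Ω for every m ≥ 0. -/
open Complex

section Stmt15Helpers
open MeasureTheory

lemma norm_exp_im (c : ℂ) (hc : c.re = 0) : ‖Complex.exp c‖ = 1 := by
  simp [Complex.norm_exp, hc]

lemma integral_exp_int (n : ℤ) :
    (∫ θ : ℝ in (0:ℝ)..(2*Real.pi), Complex.exp ((n:ℂ) * (θ:ℂ) * Complex.I))
      = if n = 0 then ((2*Real.pi : ℝ) : ℂ) else 0 := by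
  rcases eq_or_ne n 0 with h | h
  · simp [h, Complex.real_smul]
  · rw [if_neg h]
    have hc : (n:ℂ) * Complex.I ≠ 0 :=
      mul_ne_zero (by exact_mod_cast h) Complex.I_ne_zero
    have h1 : ∀ θ : ℝ, (n:ℂ) * (θ:ℂ) * Complex.I = ((n:ℂ)*Complex.I) * (θ:ℂ) := fun θ => by ring
    simp only [h1]
    rw [integral_exp_mul_complex hc]
    have h2 : Complex.exp ((n:ℂ)*Complex.I * ((2*Real.pi : ℝ):ℂ)) = 1 := by
      rw [← Complex.exp_int_mul_two_pi_mul_I n]; congr 1; push_cast; ring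
    have h3 : cexp (↑n * I * (2 * ↑Real.pi)) = 1 := by rw [← h2]; norm_cast
    simp [h3]

lemma wirt_bound (T : ℂ →L[ℝ] ℂ) (c : ℂ) (hc : ‖c‖ = 1) :
    ‖(T 1 + c * T Complex.I)/2‖ ≤ ‖T‖ := by
  have h1 := T.le_opNorm 1
  have h2 := T.le_opNorm Complex.I
  simp only [norm_one, mul_one, Complex.norm_I] at h1 h2
  have h3 : ‖T 1 + c * T Complex.I‖ ≤ ‖T‖ + ‖T‖ := by
    calc ‖T 1 + c * T Complex.I‖ ≤ ‖T 1‖ + ‖c * T Complex.I‖ := norm_add_le _ _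
      _ = ‖T 1‖ + ‖T Complex.I‖ := by rw [norm_mul, hc, one_mul]
      _ ≤ ‖T‖ + ‖T‖ := add_le_add h1 h2
  have h4 : ‖(2:ℂ)‖ = 2 := by norm_num
  rw [norm_div, h4]
  linarith

lemma fderiv_dir (T : ℂ →L[ℝ] ℂ) (θ : ℝ) :
    T ((Real.cos θ : ℂ) + (Real.sin θ : ℂ) * Complex.I)
      = Complex.exp ((θ:ℂ)*Complex.I) * ((T 1 - Complex.I * T Complex.I)/2)
      + Complex.exp (-((θ:ℂ)*Complex.I)) * ((T 1 + Complex.I * T Complex.I)/2) := by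
  have h1 : ((Real.cos θ : ℂ) + (Real.sin θ : ℂ) * Complex.I)
      = (Real.cos θ) • (1:ℂ) + (Real.sin θ) • Complex.I := by
    simp [Complex.real_smul]
  have he : Complex.exp ((θ:ℂ)*Complex.I) = (Real.cos θ : ℂ) + (Real.sin θ:ℂ) * Complex.I := by
    rw [Complex.exp_mul_I, Complex.ofReal_cos, Complex.ofReal_sin]
  have he' : Complex.exp (-((θ:ℂ)*Complex.I)) = (Real.cos θ : ℂ) - (Real.sin θ:ℂ) * Complex.I := by
    have : -((θ:ℂ)*Complex.I) = (((-θ : ℝ):ℂ))*Complex.I := by push_cast; ring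
    rw [this, Complex.exp_mul_I, Complex.ofReal_cos, Complex.ofReal_sin]
    push_cast
    simp [Real.cos_neg, Real.sin_neg]
    ring
  rw [h1, map_add, T.map_smul, T.map_smul, he, he']
  simp only [Complex.real_smul]
  linear_combination ((Real.sin θ : ℂ) * T Complex.I) * Complex.I_sq

lemma modes_vanish (p q r : ℕ → ℂ) (C : ℕ → ℝ) (hC : Summable C)
    (hp : ∀ k, ‖p k‖ ≤ C k) (hq : ∀ k, ‖q k‖ ≤ C k) (hr : ∀ k, ‖r k‖ ≤ C k)
    (h : ∀ θ : ℝ, ∑' k : ℕ, (Complex.exp ((θ:ℂ) * Complex.I) * p k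
        + Complex.exp (-((θ:ℂ) * Complex.I)) * q k + r k)
        * Complex.exp ((k:ℂ) * (θ:ℂ) * Complex.I) = 0) (n : ℤ) :
    ∑' k : ℕ, ((if (k:ℤ) + 1 = n then p k else 0)
      + (if (k:ℤ) - 1 = n then q k else 0) + (if (k:ℤ) = n then r k else 0)) = 0 := by
  set F : ℕ → ℝ → ℂ := fun k θ =>
    ((Complex.exp ((θ:ℂ) * Complex.I) * p k
        + Complex.exp (-((θ:ℂ) * Complex.I)) * q k + r k)
        * Complex.exp ((k:ℂ) * (θ:ℂ) * Complex.I))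
      * Complex.exp (-((n:ℂ) * (θ:ℂ) * Complex.I)) with hF
  have hC0 : ∀ k, 0 ≤ C k := fun k => le_trans (norm_nonneg _) (hp k)
  have hFcont : ∀ k, Continuous (F k) := by
    intro k
    apply Continuous.mul
    apply Continuous.mul
    · fun_prop
    · fun_prop
    · fun_prop
  have hexp1 : ∀ (x : ℂ), x.re = 0 → ‖Complex.exp x‖ = 1 := norm_exp_im
  have hFnorm : ∀ k (θ : ℝ), ‖F k θ‖ ≤ 3 * C k := by
    intro k θ
    rw [hF]
    simp only
    rw [norm_mul, norm_mul, hexp1 _ (by simp), hexp1 _ (by simp), mul_one, mul_one]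
    calc ‖Complex.exp ((θ:ℂ) * Complex.I) * p k
        + Complex.exp (-((θ:ℂ) * Complex.I)) * q k + r k‖
        ≤ ‖Complex.exp ((θ:ℂ) * Complex.I) * p k
          + Complex.exp (-((θ:ℂ) * Complex.I)) * q k‖ + ‖r k‖ := norm_add_le _ _
      _ ≤ (‖Complex.exp ((θ:ℂ) * Complex.I) * p k‖
          + ‖Complex.exp (-((θ:ℂ) * Complex.I)) * q k‖) + ‖r k‖ :=
            add_le_add (norm_add_le _ _) le_rfl
      _ = ‖p k‖ + ‖q k‖ + ‖r k‖ := by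
            rw [norm_mul, norm_mul, hexp1 _ (by simp), hexp1 _ (by simp), one_mul, one_mul]
      _ ≤ 3 * C k := by have := hp k; have := hq k; have := hr k; linarith
  have h2pi : (0:ℝ) ≤ 2 * Real.pi := by positivity
  have hInt : ∀ k, IntegrableOn (F k) (Set.Ioc (0:ℝ) (2*Real.pi)) :=
    fun k => (hFcont k).integrableOn_Ioc
  have hIntNorm : ∀ k, (∫ θ in Set.Ioc (0:ℝ) (2*Real.pi), ‖F k θ‖) ≤ (2*Real.pi) * (3 * C k) := by
    intro k
    have hmono : (∫ θ in Set.Ioc (0:ℝ) (2*Real.pi), ‖F k θ‖)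
        ≤ ∫ _ in Set.Ioc (0:ℝ) (2*Real.pi), 3 * C k := by
      apply integral_mono_of_nonneg
      · exact Filter.Eventually.of_forall (fun θ => norm_nonneg _)
      · exact integrableOn_const measure_Ioc_lt_top.ne
      · exact Filter.Eventually.of_forall (fun θ => hFnorm k θ)
    calc (∫ θ in Set.Ioc (0:ℝ) (2*Real.pi), ‖F k θ‖)
        ≤ ∫ _ in Set.Ioc (0:ℝ) (2*Real.pi), 3 * C k := hmono
      _ = (2*Real.pi) * (3 * C k) := by
          rw [setIntegral_const]
          rw [measureReal_def, Real.volume_Ioc]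
          rw [ENNReal.toReal_ofReal (by linarith)]
          simp [smul_eq_mul]
  have hSum : Summable fun k => ∫ θ in Set.Ioc (0:ℝ) (2*Real.pi), ‖F k θ‖ := by
    apply Summable.of_nonneg_of_le
      (fun k => integral_nonneg (fun θ => norm_nonneg _)) hIntNorm
    exact ((hC.mul_left 3).mul_left (2*Real.pi))
  have hswap := MeasureTheory.integral_tsum_of_summable_integral_norm
    (μ := volume.restrict (Set.Ioc (0:ℝ) (2*Real.pi))) (F := F) hInt hSum
  have hzero : ∀ θ : ℝ, ∑' k, F k θ = 0 := by
    intro θ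
    rw [hF]
    simp only
    rw [tsum_mul_right, h θ, zero_mul]
  rw [funext hzero] at hswap
  simp only [integral_zero] at hswap
  -- now compute each integral
  have hval : ∀ k : ℕ, (∫ θ in Set.Ioc (0:ℝ) (2*Real.pi), F k θ)
      = ((2*Real.pi : ℝ):ℂ) * ((if (k:ℤ) + 1 = n then p k else 0)
        + (if (k:ℤ) - 1 = n then q k else 0) + (if (k:ℤ) = n then r k else 0)) := by
    intro k
    have hsplit : ∀ θ : ℝ, F k θ
        = p k * Complex.exp ((((k:ℤ)+1-n : ℤ):ℂ) * (θ:ℂ) * Complex.I)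
        + q k * Complex.exp ((((k:ℤ)-1-n : ℤ):ℂ) * (θ:ℂ) * Complex.I)
        + r k * Complex.exp ((((k:ℤ)-n : ℤ):ℂ) * (θ:ℂ) * Complex.I) := by
      intro θ
      have e1 : ((((k:ℤ)+1-n : ℤ):ℂ) * (θ:ℂ) * Complex.I)
          = ((θ:ℂ) * Complex.I) + ((k:ℂ) * (θ:ℂ) * Complex.I)
            + (-((n:ℂ) * (θ:ℂ) * Complex.I)) := by push_cast; ring
      have e2 : ((((k:ℤ)-1-n : ℤ):ℂ) * (θ:ℂ) * Complex.I)
          = (-((θ:ℂ) * Complex.I)) + ((k:ℂ) * (θ:ℂ) * Complex.I)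
            + (-((n:ℂ) * (θ:ℂ) * Complex.I)) := by push_cast; ring
      have e3 : ((((k:ℤ)-n : ℤ):ℂ) * (θ:ℂ) * Complex.I)
          = ((k:ℂ) * (θ:ℂ) * Complex.I) + (-((n:ℂ) * (θ:ℂ) * Complex.I)) := by push_cast; ring
      rw [hF, e1, e2, e3]
      simp only [Complex.exp_add]
      ring
    have hic : ∀ (a : ℂ) (m : ℤ), IntervalIntegrable
        (fun θ : ℝ => a * Complex.exp ((m:ℂ) * (θ:ℂ) * Complex.I)) volume 0 (2*Real.pi) := by
      intro a m
      apply Continuous.intervalIntegrable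
      fun_prop
    rw [← intervalIntegral.integral_of_le h2pi]
    rw [intervalIntegral.integral_congr (g := fun θ : ℝ =>
        p k * Complex.exp ((((k:ℤ)+1-n : ℤ):ℂ) * (θ:ℂ) * Complex.I)
        + q k * Complex.exp ((((k:ℤ)-1-n : ℤ):ℂ) * (θ:ℂ) * Complex.I)
        + r k * Complex.exp ((((k:ℤ)-n : ℤ):ℂ) * (θ:ℂ) * Complex.I))
      (fun θ _ => hsplit θ)]
    rw [intervalIntegral.integral_add ((hic _ _).add (hic _ _)) (hic _ _),
        intervalIntegral.integral_add (hic _ _) (hic _ _),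
        intervalIntegral.integral_const_mul, intervalIntegral.integral_const_mul,
        intervalIntegral.integral_const_mul, integral_exp_int, integral_exp_int,
        integral_exp_int]
    have c1 : ((k:ℤ)+1-n = 0) ↔ ((k:ℤ)+1 = n) := by omega
    have c2 : ((k:ℤ)-1-n = 0) ↔ ((k:ℤ)-1 = n) := by omega
    have c3 : ((k:ℤ)-n = 0) ↔ ((k:ℤ) = n) := by omega
    simp only [c1, c2, c3, mul_ite, mul_zero, ite_mul, zero_mul, mul_add]
    split_ifs <;> ring
  rw [funext hval] at hswap  -- hswap : ∑' k, 2π * (...) = 0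
  rw [tsum_mul_left] at hswap
  have h2 : ((2*Real.pi : ℝ):ℂ) ≠ 0 := by
    simp only [ne_eq, Complex.ofReal_eq_zero]
    positivity
  exact (mul_eq_zero.mp hswap).resolve_left h2

lemma combine (a pb qb Jv pJ qJ : ℕ → ℂ) (μ : ℂ) (Ca : ℕ → ℝ) (T : ℝ)
    (hCa : Summable Ca) (hCa0 : ∀ k, 0 ≤ Ca k) (hT0 : 0 ≤ T)
    (ba : ∀ k, ‖a k‖ ≤ Ca k) (bp : ∀ k, ‖pb k‖ ≤ Ca k) (bq : ∀ k, ‖qb k‖ ≤ Ca k)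
    (bJ : ∀ j, ‖Jv j‖ ≤ T) (bpJ : ∀ j, ‖pJ j‖ ≤ T) (bqJ : ∀ j, ‖qJ j‖ ≤ T)
    (f1 : qb 0 = 0) (f2 : qb 1 + μ * a 0 = 0)
    (f3 : ∀ k, qb (k+2) + pb k + μ * a (k+1) = 0)
    (f4 : ∀ j, qJ j + pJ (j+2) = 0) (m : ℕ) :
    (∑' k, (a k * qJ (m+k) + Jv (m+k) * qb k))
    + (∑' k, (a k * pJ (m+2+k) + Jv (m+2+k) * pb k))
    + μ * (∑' k, a k * Jv (m+1+k)) = 0 := by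
  have sums : ∀ (f : ℕ → ℂ) (g : ℕ → ℝ), Summable g → (∀ k, ‖f k‖ ≤ g k) → Summable f :=
    fun f g hg h => Summable.of_norm (Summable.of_nonneg_of_le (fun k => norm_nonneg _) h hg)
  have mb : ∀ (x y : ℂ) (cx cy : ℝ), ‖x‖ ≤ cx → ‖y‖ ≤ cy → 0 ≤ cx → ‖x*y‖ ≤ cx*cy := by
    intro x y cx cy hx hy hcx
    rw [norm_mul]
    exact mul_le_mul hx hy (norm_nonneg _) hcx
  have sA : Summable fun k => a k * qJ (m+k) :=
    sums _ _ (hCa.mul_right T) (fun k => mb _ _ _ _ (ba k) (bqJ _) (hCa0 k))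
  have sB : Summable fun k => Jv (m+k) * qb k :=
    sums _ _ (hCa.mul_left T) (fun k => mb _ _ _ _ (bJ _) (bq k) hT0)
  have sA' : Summable fun k => a k * pJ (m+2+k) :=
    sums _ _ (hCa.mul_right T) (fun k => mb _ _ _ _ (ba k) (bpJ _) (hCa0 k))
  have sB' : Summable fun k => Jv (m+2+k) * pb k :=
    sums _ _ (hCa.mul_left T) (fun k => mb _ _ _ _ (bJ _) (bp k) hT0)
  have sC : Summable fun k => a k * Jv (m+1+k) :=
    sums _ _ (hCa.mul_right T) (fun k => mb _ _ _ _ (ba k) (bJ _) (hCa0 k))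
  rw [← tsum_mul_left (a := μ) (f := fun k => a k * Jv (m+1+k))]
  rw [← Summable.tsum_add (sA.add sB) (sA'.add sB'),
      ← Summable.tsum_add ((sA.add sB).add (sA'.add sB')) (sC.mul_left μ)]
  have e : ∀ k, (((a k * qJ (m+k) + Jv (m+k) * qb k) + (a k * pJ (m+2+k) + Jv (m+2+k) * pb k))
      + μ * (a k * Jv (m+1+k)))
      = ((Jv (m+k) * qb k + Jv (m+2+k) * pb k) + μ * (a k * Jv (m+1+k))) := by
    intro k
    rw [show m+2+k = (m+k)+2 from by omega]
    linear_combination (a k) * (f4 (m+k))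
  rw [tsum_congr e, Summable.tsum_add (sB.add sB') (sC.mul_left μ), Summable.tsum_add sB sB']
  rw [Summable.tsum_eq_zero_add sB]
  rw [Summable.tsum_eq_zero_add ((summable_nat_add_iff 1).2 sB)]
  rw [Summable.tsum_eq_zero_add (sC.mul_left μ)]
  simp only [Nat.add_zero, Nat.zero_add]
  have r1 : (∑' k : ℕ, Jv (m+(k+1+1)) * qb (k+1+1)) = ∑' k : ℕ, Jv (m+2+k) * qb (k+2) :=
    tsum_congr (fun k => by
      rw [show m+(k+1+1) = m+2+k from by omega, show k+1+1 = k+2 from by omega])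
  have r2 : (∑' k : ℕ, μ * (a (k+1) * Jv (m+1+(k+1)))) = ∑' k : ℕ, μ * (a (k+1) * Jv (m+2+k)) :=
    tsum_congr (fun k => by rw [show m+1+(k+1) = m+2+k from by omega])
  rw [r1, r2, f1, mul_zero, zero_add]
  -- remaining
  have sX : Summable fun k => Jv (m+2+k) * qb (k+2) :=
    sums _ _ (((summable_nat_add_iff 2).2 hCa).mul_left T)
      (fun k => mb _ _ _ _ (bJ _) (bq _) hT0)
  have sZ : Summable fun k => μ * (a (k+1) * Jv (m+2+k)) :=
    sums _ _ ((((summable_nat_add_iff 1).2 hCa).mul_right T).mul_left ‖μ‖)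
      (fun k => mb _ _ _ _ le_rfl (mb _ _ _ _ (ba _) (bJ _) (hCa0 _)) (norm_nonneg μ))
  have hXYZ : (∑' k, Jv (m+2+k) * qb (k+2)) + (∑' k, Jv (m+2+k) * pb k)
      + (∑' k, μ * (a (k+1) * Jv (m+2+k)))
      = ∑' k, ((Jv (m+2+k) * qb (k+2) + Jv (m+2+k) * pb k) + μ * (a (k+1) * Jv (m+2+k))) := by
    rw [Summable.tsum_add (sX.add sB') sZ, Summable.tsum_add sX sB']
  have hzero : (∑' k : ℕ, ((Jv (m+2+k) * qb (k+2) + Jv (m+2+k) * pb k)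
      + μ * (a (k+1) * Jv (m+2+k)))) = 0 := by
    rw [tsum_congr (f := fun k => ((Jv (m+2+k) * qb (k+2) + Jv (m+2+k) * pb k)
      + μ * (a (k+1) * Jv (m+2+k)))) (g := fun _ => (0:ℂ))
      (fun k => by linear_combination (Jv (m+2+k)) * (f3 k))]
    exact tsum_zero
  linear_combination (Jv (m+1)) * f2 + hXYZ + hzero

end Stmt15Helpers

/-- If `b(z,θ) = ∑_{k≥0} β_k(z) e^{ikθ}` satisfies
`ξ(θ)·∇_z b = -μ_t b` on an open set `Ω ⊆ ℂ`, and `(J_m)_{m≥0}` solves the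
attenuation-free system `∂̄J_m + ∂J_{m+2} = 0` on `Ω`, then the convolution
`I_m = ∑_{k≥0} β_k J_{m+k}` solves the attenuated system
`∂̄I_m + ∂I_{m+2} + μ_t I_{m+1} = 0` on `Ω`. -/
theorem stmt_15 (Ω : Set ℂ) (hΩ : IsOpen Ω) (μt : ℂ → ℝ)
    (β : ℕ → ℂ → ℂ) (J : ℕ → ℂ → ℂ)
    (hβdiff : ∀ k : ℕ, ContDiffOn ℝ 1 (β k) Ω)
    (hβsum : ∀ Kc : Set ℂ, Kc ⊆ Ω → IsCompact Kc →
      ∃ C : ℕ → ℝ, Summable C ∧ ∀ k : ℕ, ∀ z ∈ Kc,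
        ‖β k z‖ ≤ C k ∧ ‖fderiv ℝ (β k) z‖ ≤ C k)
    (hb : ∀ z ∈ Ω, ∀ θ : ℝ,
      fderiv ℝ (fun w : ℂ => ∑' k : ℕ, β k w * Complex.exp ((k : ℂ) * (θ : ℂ) * Complex.I))
          z ((Real.cos θ : ℂ) + (Real.sin θ : ℂ) * Complex.I)
        = -(μt z : ℂ) * ∑' k : ℕ, β k z * Complex.exp ((k : ℂ) * (θ : ℂ) * Complex.I))
    (hJdiff : ∀ m : ℕ, ContDiffOn ℝ 1 (J m) Ω)
    (hJsum : ∀ Kc : Set ℂ, Kc ⊆ Ω → IsCompact Kc →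
      ∃ C : ℕ → ℝ, Summable C ∧ ∀ m : ℕ, ∀ z ∈ Kc,
        ‖J m z‖ ≤ C m ∧ ‖fderiv ℝ (J m) z‖ ≤ C m)
    (hJsys : ∀ m : ℕ, ∀ z ∈ Ω,
      wirtingerDBar (J m) z + wirtingerD (J (m + 2)) z = 0)
    (I : ℕ → ℂ → ℂ)
    (hI : ∀ m : ℕ, ∀ z : ℂ, I m z = ∑' k : ℕ, β k z * J (m + k) z) :
    ∀ m : ℕ, ∀ z ∈ Ω,
      wirtingerDBar (I m) z + wirtingerD (I (m + 2)) z + (μt z : ℂ) * I (m + 1) z = 0 := by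
  intro m z hz
  classical
  obtain ⟨ε, hε, hball⟩ := Metric.isOpen_iff.mp hΩ z hz
  have hrpos : 0 < ε/2 := by positivity
  have hKsub : Metric.closedBall z (ε/2) ⊆ Ω := by
    intro w hw
    apply hball
    simp only [Metric.mem_closedBall] at hw
    simp only [Metric.mem_ball]
    linarith
  obtain ⟨Cβ, hCβsum, hCβb⟩ := hβsum _ hKsub (isCompact_closedBall z _)
  obtain ⟨CJ, hCJsum, hCJb⟩ := hJsum _ hKsub (isCompact_closedBall z _)
  have hzK : z ∈ Metric.closedBall z (ε/2) := Metric.mem_closedBall_self hrpos.le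
  have hzb : z ∈ Metric.ball z (ε/2) := Metric.mem_ball_self hrpos
  have hballΩ : Metric.ball z (ε/2) ⊆ Ω := Metric.ball_subset_closedBall.trans hKsub
  have hCβ0 : ∀ k, 0 ≤ Cβ k := fun k => le_trans (norm_nonneg _) (hCβb k z hzK).1
  have hCJ0 : ∀ j, 0 ≤ CJ j := fun j => le_trans (norm_nonneg _) (hCJb j z hzK).1
  have hTle : ∀ j, CJ j ≤ ∑' i, CJ i := fun j => Summable.le_tsum hCJsum j (fun i _ => hCJ0 i)
  have hT0 : (0:ℝ) ≤ ∑' i, CJ i := tsum_nonneg hCJ0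
  have hβd : ∀ k, ∀ w ∈ Metric.ball z (ε/2), HasFDerivAt (β k) (fderiv ℝ (β k) w) w :=
    fun k w hw => (((hβdiff k).differentiableOn one_ne_zero).differentiableAt
      (hΩ.mem_nhds (hballΩ hw))).hasFDerivAt
  have hJd : ∀ j, ∀ w ∈ Metric.ball z (ε/2), HasFDerivAt (J j) (fderiv ℝ (J j) w) w :=
    fun j w hw => (((hJdiff j).differentiableOn one_ne_zero).differentiableAt
      (hΩ.mem_nhds (hballΩ hw))).hasFDerivAt
  have sums : ∀ (f : ℕ → ℂ) (g : ℕ → ℝ), Summable g → (∀ k, ‖f k‖ ≤ g k) → Summable f :=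
    fun f g hg h => Summable.of_norm (Summable.of_nonneg_of_le (fun k => norm_nonneg _) h hg)
  have mb : ∀ (x y : ℂ) (cx cy : ℝ), ‖x‖ ≤ cx → ‖y‖ ≤ cy → 0 ≤ cx → ‖x*y‖ ≤ cx*cy := by
    intro x y cx cy hx hy hcx
    rw [norm_mul]
    exact mul_le_mul hx hy (norm_nonneg _) hcx
  have appb : ∀ (S : ℂ →L[ℝ] ℂ) (c : ℝ) (v : ℂ), ‖S‖ ≤ c → ‖v‖ ≤ 1 → ‖S v‖ ≤ c := by
    intro S c v hS hv
    have hc : 0 ≤ c := le_trans (norm_nonneg _) hS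
    calc ‖S v‖ ≤ ‖S‖ * ‖v‖ := S.le_opNorm v
      _ ≤ c * 1 := mul_le_mul hS hv (norm_nonneg v) hc
      _ = c := mul_one c
  have bβ : ∀ k, ‖β k z‖ ≤ Cβ k := fun k => (hCβb k z hzK).1
  have bDβ : ∀ k, ‖fderiv ℝ (β k) z‖ ≤ Cβ k := fun k => (hCβb k z hzK).2
  have bJv : ∀ j, ‖J j z‖ ≤ ∑' i, CJ i := fun j => le_trans (hCJb j z hzK).1 (hTle j)
  have bDJ : ∀ j, ‖fderiv ℝ (J j) z‖ ≤ ∑' i, CJ i :=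
    fun j => le_trans (hCJb j z hzK).2 (hTle j)
  -- PART 1 : the Fourier mode relations for β
  have hbD : ∀ θ : ℝ, HasFDerivAt
      (fun w : ℂ => ∑' k : ℕ, β k w * Complex.exp ((k : ℂ) * (θ : ℂ) * Complex.I))
      (∑' k : ℕ, Complex.exp ((k : ℂ) * (θ : ℂ) * Complex.I) • fderiv ℝ (β k) z) z := by
    intro θ
    apply hasFDerivAt_tsum_of_isPreconnected (u := Cβ)
      (f' := fun k w => Complex.exp ((k : ℂ) * (θ : ℂ) * Complex.I) • fderiv ℝ (β k) w)
      hCβsum Metric.isOpen_ball (convex_ball z (ε/2)).isPreconnected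
      (fun k w hw => (hβd k w hw).mul_const _) ?_ hzb ?_ hzb
    · intro k w hw
      rw [norm_smul, norm_exp_im _ (by simp), one_mul]
      exact (hCβb k w (Metric.ball_subset_closedBall hw)).2
    · apply sums _ Cβ hCβsum
      intro k
      rw [norm_mul, norm_exp_im _ (by simp), mul_one]
      exact bβ k
  have hsumT : ∀ θ : ℝ, Summable
      (fun k : ℕ => Complex.exp ((k : ℂ) * (θ : ℂ) * Complex.I) • fderiv ℝ (β k) z) := by
    intro θ
    apply Summable.of_norm
    apply Summable.of_nonneg_of_le (fun k => norm_nonneg _) ?_ hCβsum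
    intro k
    rw [norm_smul, norm_exp_im _ (by simp), one_mul]
    exact bDβ k
  have hvb : ∀ θ : ℝ, ‖(Real.cos θ : ℂ) + (Real.sin θ : ℂ) * Complex.I‖ ≤ 2 := by
    intro θ
    calc ‖(Real.cos θ : ℂ) + (Real.sin θ : ℂ) * Complex.I‖
        ≤ ‖(Real.cos θ : ℂ)‖ + ‖(Real.sin θ : ℂ) * Complex.I‖ := norm_add_le _ _
      _ = |Real.cos θ| + |Real.sin θ| := by
          rw [norm_mul, Complex.norm_I, mul_one, Complex.norm_real, Complex.norm_real]
          rfl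
      _ ≤ 1 + 1 := add_le_add (Real.abs_cos_le_one θ) (Real.abs_sin_le_one θ)
      _ = 2 := by norm_num
  have hrel : ∀ θ : ℝ, ∑' k : ℕ,
      (Complex.exp ((θ:ℂ) * Complex.I)
          * ((fderiv ℝ (β k) z 1 - Complex.I * fderiv ℝ (β k) z Complex.I)/2)
        + Complex.exp (-((θ:ℂ) * Complex.I))
          * ((fderiv ℝ (β k) z 1 + Complex.I * fderiv ℝ (β k) z Complex.I)/2)
        + (μt z : ℂ) * β k z)
      * Complex.exp ((k:ℂ) * (θ:ℂ) * Complex.I) = 0 := by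
    intro θ
    have h1 := hb z hz θ
    rw [(hbD θ).fderiv] at h1
    have h2 := ContinuousLinearMap.map_tsum
      (ContinuousLinearMap.apply ℝ ℂ ((Real.cos θ : ℂ) + (Real.sin θ : ℂ) * Complex.I))
      (hsumT θ)
    simp only [ContinuousLinearMap.apply_apply] at h2
    rw [h2] at h1
    simp only [ContinuousLinearMap.coe_smul', Pi.smul_apply, smul_eq_mul] at h1
    have hsum1 : Summable fun k : ℕ => Complex.exp ((k:ℂ) * (θ:ℂ) * Complex.I)
        * (fderiv ℝ (β k) z ((Real.cos θ : ℂ) + (Real.sin θ : ℂ) * Complex.I)) := by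
      apply sums _ (fun k => Cβ k * 2) (hCβsum.mul_right 2)
      intro k
      rw [norm_mul, norm_exp_im _ (by simp), one_mul]
      calc ‖fderiv ℝ (β k) z ((Real.cos θ : ℂ) + (Real.sin θ : ℂ) * Complex.I)‖
          ≤ ‖fderiv ℝ (β k) z‖ * ‖(Real.cos θ : ℂ) + (Real.sin θ : ℂ) * Complex.I‖ :=
            ContinuousLinearMap.le_opNorm _ _
        _ ≤ Cβ k * 2 := mul_le_mul (bDβ k) (hvb θ) (norm_nonneg _) (hCβ0 k)
    have hsum2 : Summable fun k : ℕ => ((μt z : ℂ) * β k z)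
        * Complex.exp ((k:ℂ) * (θ:ℂ) * Complex.I) := by
      apply sums _ (fun k => ‖(μt z : ℂ)‖ * Cβ k) (hCβsum.mul_left _)
      intro k
      rw [norm_mul, norm_exp_im _ (by simp), mul_one, norm_mul]
      exact mul_le_mul_of_nonneg_left (bβ k) (norm_nonneg _)
    calc ∑' k : ℕ, (Complex.exp ((θ:ℂ) * Complex.I)
          * ((fderiv ℝ (β k) z 1 - Complex.I * fderiv ℝ (β k) z Complex.I)/2)
        + Complex.exp (-((θ:ℂ) * Complex.I))
          * ((fderiv ℝ (β k) z 1 + Complex.I * fderiv ℝ (β k) z Complex.I)/2)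
        + (μt z : ℂ) * β k z) * Complex.exp ((k:ℂ) * (θ:ℂ) * Complex.I)
        = ∑' k : ℕ, (Complex.exp ((k:ℂ) * (θ:ℂ) * Complex.I)
            * (fderiv ℝ (β k) z ((Real.cos θ : ℂ) + (Real.sin θ : ℂ) * Complex.I))
          + ((μt z : ℂ) * β k z) * Complex.exp ((k:ℂ) * (θ:ℂ) * Complex.I)) := by
          apply tsum_congr
          intro k
          rw [fderiv_dir (fderiv ℝ (β k) z) θ]
          ring
      _ = (∑' k : ℕ, Complex.exp ((k:ℂ) * (θ:ℂ) * Complex.I)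
            * (fderiv ℝ (β k) z ((Real.cos θ : ℂ) + (Real.sin θ : ℂ) * Complex.I)))
          + ∑' k : ℕ, ((μt z : ℂ) * β k z) * Complex.exp ((k:ℂ) * (θ:ℂ) * Complex.I) :=
          Summable.tsum_add hsum1 hsum2
      _ = 0 := by
          rw [h1]
          have h3 : (∑' k : ℕ, ((μt z : ℂ) * β k z) * Complex.exp ((k:ℂ) * (θ:ℂ) * Complex.I))
              = (μt z : ℂ) * ∑' k : ℕ, β k z * Complex.exp ((k:ℂ) * (θ:ℂ) * Complex.I) := by
            rw [← tsum_mul_left]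
            exact tsum_congr (fun k => by ring)
          rw [h3]
          ring
  -- mode extraction
  have M : ∀ n : ℤ, ∑' k : ℕ,
      ((if (k:ℤ) + 1 = n
          then (fderiv ℝ (β k) z 1 - Complex.I * fderiv ℝ (β k) z Complex.I)/2 else 0)
        + (if (k:ℤ) - 1 = n
          then (fderiv ℝ (β k) z 1 + Complex.I * fderiv ℝ (β k) z Complex.I)/2 else 0)
        + (if (k:ℤ) = n then (μt z : ℂ) * β k z else 0)) = 0 := by
    intro n
    apply modes_vanish _ _ _ (fun k => (1 + ‖(μt z : ℂ)‖) * Cβ k) (hCβsum.mul_left _)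
      ?_ ?_ ?_ hrel n
    · intro k
      have h1 : ‖(fderiv ℝ (β k) z 1 - Complex.I * fderiv ℝ (β k) z Complex.I)/2‖
          ≤ Cβ k := by
        have := wirt_bound (fderiv ℝ (β k) z) (-Complex.I) (by simp)
        refine le_trans (le_of_eq ?_) (this.trans (bDβ k))
        congr 1
        ring
      nlinarith [norm_nonneg ((μt z : ℂ)), hCβ0 k]
    · intro k
      have h1 : ‖(fderiv ℝ (β k) z 1 + Complex.I * fderiv ℝ (β k) z Complex.I)/2‖
          ≤ Cβ k := (wirt_bound (fderiv ℝ (β k) z) Complex.I (by simp)).trans (bDβ k)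
      nlinarith [norm_nonneg ((μt z : ℂ)), hCβ0 k]
    · intro k
      show ‖(μt z : ℂ) * β k z‖ ≤ (1 + ‖(μt z : ℂ)‖) * Cβ k
      rw [norm_mul]
      nlinarith [norm_nonneg ((μt z : ℂ)), hCβ0 k, bβ k, norm_nonneg (β k z),
        mul_le_mul_of_nonneg_left (bβ k) (norm_nonneg ((μt z : ℂ)))]
  have bpβ : ∀ k, ‖(fderiv ℝ (β k) z 1 - Complex.I * fderiv ℝ (β k) z Complex.I)/2‖ ≤ Cβ k := by
    intro k
    have h := wirt_bound (fderiv ℝ (β k) z) (-Complex.I) (by simp)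
    refine le_trans (le_of_eq ?_) (h.trans (bDβ k))
    congr 1
    ring
  have bqβ : ∀ k, ‖(fderiv ℝ (β k) z 1 + Complex.I * fderiv ℝ (β k) z Complex.I)/2‖ ≤ Cβ k :=
    fun k => (wirt_bound (fderiv ℝ (β k) z) Complex.I (by simp)).trans (bDβ k)
  have bpJ : ∀ j, ‖(fderiv ℝ (J j) z 1 - Complex.I * fderiv ℝ (J j) z Complex.I)/2‖ ≤ ∑' i, CJ i := by
    intro j
    have h := wirt_bound (fderiv ℝ (J j) z) (-Complex.I) (by simp)
    refine le_trans (le_of_eq ?_) (h.trans (bDJ j))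
    congr 1
    ring
  have bqJ : ∀ j, ‖(fderiv ℝ (J j) z 1 + Complex.I * fderiv ℝ (J j) z Complex.I)/2‖ ≤ ∑' i, CJ i :=
    fun j => (wirt_bound (fderiv ℝ (J j) z) Complex.I (by simp)).trans (bDJ j)
  -- summability of the single-point if-functions
  have sifP : ∀ n : ℤ, Summable (fun b : ℕ => if (b:ℤ) + 1 = n
      then (fderiv ℝ (β b) z 1 - Complex.I * fderiv ℝ (β b) z Complex.I)/2 else 0) := by
    intro n
    apply sums _ Cβ hCβsum
    intro b
    split_ifs
    · exact bpβ b
    · simpa using hCβ0 b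
  have sifQ : ∀ n : ℤ, Summable (fun b : ℕ => if (b:ℤ) - 1 = n
      then (fderiv ℝ (β b) z 1 + Complex.I * fderiv ℝ (β b) z Complex.I)/2 else 0) := by
    intro n
    apply sums _ Cβ hCβsum
    intro b
    split_ifs
    · exact bqβ b
    · simpa using hCβ0 b
  have sifR : ∀ n : ℤ, Summable (fun b : ℕ => if (b:ℤ) = n
      then (μt z : ℂ) * β b z else 0) := by
    intro n
    apply sums _ (fun b => ‖(μt z : ℂ)‖ * Cβ b) (hCβsum.mul_left _)
    intro b
    split_ifs
    · rw [norm_mul]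
      exact mul_le_mul_of_nonneg_left (bβ b) (norm_nonneg _)
    · simp only [norm_zero]
      exact mul_nonneg (norm_nonneg _) (hCβ0 b)
  have hsplitM : ∀ n : ℤ, (∑' b : ℕ,
      ((if (b:ℤ) + 1 = n
          then (fderiv ℝ (β b) z 1 - Complex.I * fderiv ℝ (β b) z Complex.I)/2 else 0)
        + (if (b:ℤ) - 1 = n
          then (fderiv ℝ (β b) z 1 + Complex.I * fderiv ℝ (β b) z Complex.I)/2 else 0)
        + (if (b:ℤ) = n then (μt z : ℂ) * β b z else 0)))
      = (∑' b : ℕ, (if (b:ℤ) + 1 = n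
          then (fderiv ℝ (β b) z 1 - Complex.I * fderiv ℝ (β b) z Complex.I)/2 else 0))
      + (∑' b : ℕ, (if (b:ℤ) - 1 = n
          then (fderiv ℝ (β b) z 1 + Complex.I * fderiv ℝ (β b) z Complex.I)/2 else 0))
      + (∑' b : ℕ, (if (b:ℤ) = n then (μt z : ℂ) * β b z else 0)) := by
    intro n
    rw [Summable.tsum_add ((sifP n).add (sifQ n)) (sifR n), Summable.tsum_add (sifP n) (sifQ n)]
  have fact1 : (fderiv ℝ (β 0) z 1 + Complex.I * fderiv ℝ (β 0) z Complex.I)/2 = 0 := by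
    have h' := M (-1)
    have eP : (∑' b : ℕ, (if (b:ℤ) + 1 = (-1:ℤ)
        then (fderiv ℝ (β b) z 1 - Complex.I * fderiv ℝ (β b) z Complex.I)/2 else 0)) = 0 :=
      (tsum_congr (fun b => if_neg (by omega))).trans tsum_zero
    have eQ : (∑' b : ℕ, (if (b:ℤ) - 1 = (-1:ℤ)
        then (fderiv ℝ (β b) z 1 + Complex.I * fderiv ℝ (β b) z Complex.I)/2 else 0))
        = (fderiv ℝ (β 0) z 1 + Complex.I * fderiv ℝ (β 0) z Complex.I)/2 :=
      (tsum_eq_single 0 (fun b hb => if_neg (by omega))).trans (if_pos (by omega))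
    have eR : (∑' b : ℕ, (if (b:ℤ) = (-1:ℤ) then (μt z : ℂ) * β b z else 0)) = 0 :=
      (tsum_congr (fun b => if_neg (by omega))).trans tsum_zero
    linear_combination h' - hsplitM (-1) - eP - eQ - eR
  have fact2 : (fderiv ℝ (β 1) z 1 + Complex.I * fderiv ℝ (β 1) z Complex.I)/2
      + (μt z : ℂ) * β 0 z = 0 := by
    have h' := M 0
    have eP : (∑' b : ℕ, (if (b:ℤ) + 1 = (0:ℤ)
        then (fderiv ℝ (β b) z 1 - Complex.I * fderiv ℝ (β b) z Complex.I)/2 else 0)) = 0 :=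
      (tsum_congr (fun b => if_neg (by omega))).trans tsum_zero
    have eQ : (∑' b : ℕ, (if (b:ℤ) - 1 = (0:ℤ)
        then (fderiv ℝ (β b) z 1 + Complex.I * fderiv ℝ (β b) z Complex.I)/2 else 0))
        = (fderiv ℝ (β 1) z 1 + Complex.I * fderiv ℝ (β 1) z Complex.I)/2 :=
      (tsum_eq_single 1 (fun b hb => if_neg (by omega))).trans (if_pos (by omega))
    have eR : (∑' b : ℕ, (if (b:ℤ) = (0:ℤ) then (μt z : ℂ) * β b z else 0))
        = (μt z : ℂ) * β 0 z :=
      (tsum_eq_single 0 (fun b hb => if_neg (by omega))).trans (if_pos (by omega))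
    linear_combination h' - hsplitM 0 - eP - eQ - eR
  have fact3 : ∀ k0 : ℕ,
      (fderiv ℝ (β (k0+2)) z 1 + Complex.I * fderiv ℝ (β (k0+2)) z Complex.I)/2
      + (fderiv ℝ (β k0) z 1 - Complex.I * fderiv ℝ (β k0) z Complex.I)/2
      + (μt z : ℂ) * β (k0+1) z = 0 := by
    intro k0
    have h' := M ((k0:ℤ)+1)
    have eP : (∑' b : ℕ, (if (b:ℤ) + 1 = (k0:ℤ)+1
        then (fderiv ℝ (β b) z 1 - Complex.I * fderiv ℝ (β b) z Complex.I)/2 else 0))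
        = (fderiv ℝ (β k0) z 1 - Complex.I * fderiv ℝ (β k0) z Complex.I)/2 :=
      (tsum_eq_single k0 (fun b hb => if_neg (by omega))).trans (if_pos rfl)
    have eQ : (∑' b : ℕ, (if (b:ℤ) - 1 = (k0:ℤ)+1
        then (fderiv ℝ (β b) z 1 + Complex.I * fderiv ℝ (β b) z Complex.I)/2 else 0))
        = (fderiv ℝ (β (k0+2)) z 1 + Complex.I * fderiv ℝ (β (k0+2)) z Complex.I)/2 :=
      (tsum_eq_single (k0+2) (fun b hb => if_neg (by omega))).trans (if_pos (by omega))
    have eR : (∑' b : ℕ, (if (b:ℤ) = (k0:ℤ)+1 then (μt z : ℂ) * β b z else 0))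
        = (μt z : ℂ) * β (k0+1) z :=
      (tsum_eq_single (k0+1) (fun b hb => if_neg (by omega))).trans (if_pos (by omega))
    linear_combination h' - hsplitM ((k0:ℤ)+1) - eP - eQ - eR
  -- PART 2 : differentiating the convolution series
  have hkey : ∀ m' : ℕ, HasFDerivAt (fun w => ∑' k : ℕ, β k w * J (m'+k) w)
      (∑' k : ℕ, (β k z • fderiv ℝ (J (m'+k)) z + J (m'+k) z • fderiv ℝ (β k) z)) z := by
    intro m'
    apply hasFDerivAt_tsum_of_isPreconnected (u := fun k => 2 * ((∑' i, CJ i) * Cβ k))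
      (f' := fun k w => β k w • fderiv ℝ (J (m'+k)) w + J (m'+k) w • fderiv ℝ (β k) w)
      ((hCβsum.mul_left _).mul_left 2) Metric.isOpen_ball (convex_ball z (ε/2)).isPreconnected
      (fun k w hw => (hβd k w hw).mul (hJd (m'+k) w hw)) ?_ hzb ?_ hzb
    · intro k w hw
      have hwK := Metric.ball_subset_closedBall hw
      have h1 := (hCβb k w hwK).1
      have h2 := (hCβb k w hwK).2
      have h3 := le_trans (hCJb (m'+k) w hwK).1 (hTle (m'+k))
      have h4 := le_trans (hCJb (m'+k) w hwK).2 (hTle (m'+k))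
      have p1 : ‖β k w‖ * ‖fderiv ℝ (J (m'+k)) w‖ ≤ Cβ k * (∑' i, CJ i) :=
        mul_le_mul h1 h4 (norm_nonneg _) (hCβ0 k)
      have p2 : ‖J (m'+k) w‖ * ‖fderiv ℝ (β k) w‖ ≤ (∑' i, CJ i) * Cβ k :=
        mul_le_mul h3 h2 (norm_nonneg _) hT0
      calc ‖β k w • fderiv ℝ (J (m'+k)) w + J (m'+k) w • fderiv ℝ (β k) w‖
          ≤ ‖β k w • fderiv ℝ (J (m'+k)) w‖ + ‖J (m'+k) w • fderiv ℝ (β k) w‖ :=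
            norm_add_le _ _
        _ = ‖β k w‖ * ‖fderiv ℝ (J (m'+k)) w‖ + ‖J (m'+k) w‖ * ‖fderiv ℝ (β k) w‖ := by
            rw [norm_smul, norm_smul]
        _ ≤ 2 * ((∑' i, CJ i) * Cβ k) := by nlinarith [p1, p2]
    · apply sums _ (fun k => Cβ k * (∑' i, CJ i)) (hCβsum.mul_right _)
      intro k
      exact mb _ _ _ _ (bβ k) (bJv (m'+k)) (hCβ0 k)
  have hsumD : ∀ m' : ℕ, Summable (fun k : ℕ =>
      β k z • fderiv ℝ (J (m'+k)) z + J (m'+k) z • fderiv ℝ (β k) z) := by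
    intro m'
    apply Summable.of_norm
    apply Summable.of_nonneg_of_le (fun k => norm_nonneg _) ?_
      ((hCβsum.mul_left (∑' i, CJ i)).mul_left 2)
    intro k
    have p1 : ‖β k z‖ * ‖fderiv ℝ (J (m'+k)) z‖ ≤ Cβ k * (∑' i, CJ i) :=
      mul_le_mul (bβ k) (bDJ (m'+k)) (norm_nonneg _) (hCβ0 k)
    have p2 : ‖J (m'+k) z‖ * ‖fderiv ℝ (β k) z‖ ≤ (∑' i, CJ i) * Cβ k :=
      mul_le_mul (bJv (m'+k)) (bDβ k) (norm_nonneg _) hT0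
    calc ‖β k z • fderiv ℝ (J (m'+k)) z + J (m'+k) z • fderiv ℝ (β k) z‖
        ≤ ‖β k z • fderiv ℝ (J (m'+k)) z‖ + ‖J (m'+k) z • fderiv ℝ (β k) z‖ := norm_add_le _ _
      _ = ‖β k z‖ * ‖fderiv ℝ (J (m'+k)) z‖ + ‖J (m'+k) z‖ * ‖fderiv ℝ (β k) z‖ := by
          rw [norm_smul, norm_smul]
      _ ≤ 2 * ((∑' i, CJ i) * Cβ k) := by nlinarith [p1, p2]
  have hIeq : ∀ m' : ℕ, I m' = fun w => ∑' k : ℕ, β k w * J (m'+k) w := fun m' => funext (hI m')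
  have hDIv : ∀ m' : ℕ, ∀ v : ℂ, fderiv ℝ (I m') z v
      = ∑' k : ℕ, (β k z * (fderiv ℝ (J (m'+k)) z v) + J (m'+k) z * (fderiv ℝ (β k) z v)) := by
    intro m' v
    have hD : fderiv ℝ (I m') z
        = ∑' k : ℕ, (β k z • fderiv ℝ (J (m'+k)) z + J (m'+k) z • fderiv ℝ (β k) z) := by
      rw [hIeq m']
      exact (hkey m').fderiv
    rw [hD]
    have h2 := ContinuousLinearMap.map_tsum (ContinuousLinearMap.apply ℝ ℂ v) (hsumD m')
    simp only [ContinuousLinearMap.apply_apply] at h2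
    rw [h2]
    apply tsum_congr
    intro k
    simp [smul_eq_mul]
  have sv : ∀ v : ℂ, ‖v‖ ≤ 1 → ∀ m' : ℕ, Summable (fun k : ℕ =>
      β k z * (fderiv ℝ (J (m'+k)) z v) + J (m'+k) z * (fderiv ℝ (β k) z v)) := by
    intro v hv m'
    apply sums _ (fun k => Cβ k * (∑' i, CJ i) + (∑' i, CJ i) * Cβ k)
      ((hCβsum.mul_right _).add (hCβsum.mul_left _))
    intro k
    calc ‖β k z * (fderiv ℝ (J (m'+k)) z v) + J (m'+k) z * (fderiv ℝ (β k) z v)‖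
        ≤ ‖β k z * (fderiv ℝ (J (m'+k)) z v)‖ + ‖J (m'+k) z * (fderiv ℝ (β k) z v)‖ :=
          norm_add_le _ _
      _ ≤ Cβ k * (∑' i, CJ i) + (∑' i, CJ i) * Cβ k :=
          add_le_add (mb _ _ _ _ (bβ k) (appb _ _ _ (bDJ (m'+k)) hv) (hCβ0 k))
                     (mb _ _ _ _ (bJv (m'+k)) (appb _ _ _ (bDβ k) hv) hT0)
  have key2 : ∀ m' : ℕ, wirtingerDBar (I m') z = ∑' k : ℕ,
      (β k z * ((fderiv ℝ (J (m'+k)) z 1 + Complex.I * fderiv ℝ (J (m'+k)) z Complex.I)/2)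
       + J (m'+k) z * ((fderiv ℝ (β k) z 1 + Complex.I * fderiv ℝ (β k) z Complex.I)/2)) := by
    intro m'
    simp only [wirtingerDBar]
    rw [hDIv m' 1, hDIv m' Complex.I]
    rw [← tsum_mul_left (a := Complex.I)]
    rw [← Summable.tsum_add (sv 1 (by norm_num) m') ((sv Complex.I (by simp) m').mul_left Complex.I)]
    rw [← tsum_div_const]
    apply tsum_congr
    intro k
    ring
  have key3 : ∀ m' : ℕ, wirtingerD (I m') z = ∑' k : ℕ,
      (β k z * ((fderiv ℝ (J (m'+k)) z 1 - Complex.I * fderiv ℝ (J (m'+k)) z Complex.I)/2)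
       + J (m'+k) z * ((fderiv ℝ (β k) z 1 - Complex.I * fderiv ℝ (β k) z Complex.I)/2)) := by
    intro m'
    simp only [wirtingerD]
    rw [hDIv m' 1, hDIv m' Complex.I]
    rw [sub_eq_add_neg, ← neg_mul]
    rw [← tsum_mul_left (a := -Complex.I)]
    rw [← Summable.tsum_add (sv 1 (by norm_num) m') ((sv Complex.I (by simp) m').mul_left (-Complex.I))]
    rw [← tsum_div_const]
    apply tsum_congr
    intro k
    ring
  have fact4 : ∀ j : ℕ, (fderiv ℝ (J j) z 1 + Complex.I * fderiv ℝ (J j) z Complex.I)/2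
      + (fderiv ℝ (J (j+2)) z 1 - Complex.I * fderiv ℝ (J (j+2)) z Complex.I)/2 = 0 := by
    intro j
    have h := hJsys j z hz
    simpa only [wirtingerDBar, wirtingerD] using h
  rw [key2 m, key3 (m+2), hI (m+1) z]
  exact combine (fun k => β k z)
    (fun k => (fderiv ℝ (β k) z 1 - Complex.I * fderiv ℝ (β k) z Complex.I)/2)
    (fun k => (fderiv ℝ (β k) z 1 + Complex.I * fderiv ℝ (β k) z Complex.I)/2)
    (fun j => J j z)
    (fun j => (fderiv ℝ (J j) z 1 - Complex.I * fderiv ℝ (J j) z Complex.I)/2)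
    (fun j => (fderiv ℝ (J j) z 1 + Complex.I * fderiv ℝ (J j) z Complex.I)/2)
    ((μt z : ℂ)) Cβ (∑' i, CJ i) hCβsum hCβ0 hT0
    bβ bpβ bqβ bJv bpJ bqJ fact1 fact2 fact3 fact4 m
end
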